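/- arXiv:1410.3100 — 7 statements merged into one kernel-verified Lean document; each statement's English description precedes it below -/
import Mathlib

section
/- Let Ω ⊂ ℝ² be a bounded simply connected domain, let S = S(c_S,R) ⊂ Ω be a square with ∂S ∩ ∂Ω ≠ ∅, and let B ∈ Ω ∖ S̄; let G_B and T_B be as defined below. Then for every z ∈ T_B and every point u ∈ K(z)̄ ∩ Ω there exists a polygonal path γ ⊂ Ω joining u to B such that (γ ∖ {u}) ∩ S̄ = ∅. In particular, the square K(z) is contained in G_B, i.e. K(z) and B lie in the same connected component of Ω ∖ S̄. -/
set_option maxHeartbeats 1000000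
open Set Metric


/-- A polygonal path (as a subset of the plane) joining `x` to `y`. -/
def IsPolyPath (γ : Set (ℝ × ℝ)) (x y : ℝ × ℝ) : Prop :=
  ∃ (n : ℕ) (p : Fin (n + 2) → ℝ × ℝ), p 0 = x ∧ p (Fin.last (n + 1)) = y ∧
    γ = ⋃ i : Fin (n + 1), segment ℝ (p i.castSucc) (p i.succ)

lemma iUnion_fin_succ' {α : Type*} (n : ℕ) (f : Fin (n+1) → Set α) :
    (⋃ i, f i) = f 0 ∪ ⋃ i : Fin n, f i.succ := by
  ext x; simp [Fin.exists_fin_succ]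

lemma iUnion_fin_last' {α : Type*} (n : ℕ) (f : Fin (n+1) → Set α) :
    (⋃ i, f i) = (⋃ i : Fin n, f i.castSucc) ∪ f (Fin.last n) := by
  ext x
  simp only [mem_iUnion, mem_union]
  constructor
  · rintro ⟨i, hi⟩
    induction i using Fin.lastCases with
    | last => exact Or.inr hi
    | cast j => exact Or.inl ⟨j, hi⟩
  · rintro (⟨i, hi⟩ | hi)
    exacts [⟨i.castSucc, hi⟩, ⟨Fin.last n, hi⟩]

lemma isPolyPath_segment (x y : ℝ × ℝ) : IsPolyPath (segment ℝ x y) x y := by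
  refine ⟨0, ![x, y], rfl, rfl, ?_⟩
  ext w
  simp [Fin.exists_fin_one]

lemma IsPolyPath.reverse {γ : Set (ℝ × ℝ)} {x y : ℝ × ℝ} (h : IsPolyPath γ x y) :
    IsPolyPath γ y x := by
  obtain ⟨n, p, h0, hl, hγ⟩ := h
  refine ⟨n, p ∘ Fin.rev, by simp [Fin.rev_zero, hl], by simp [Fin.rev_last, h0], ?_⟩
  rw [hγ]
  ext w
  simp only [mem_iUnion, Function.comp_apply]
  constructor
  · rintro ⟨i, hi⟩
    refine ⟨i.rev, ?_⟩
    rw [Fin.rev_castSucc, Fin.rev_succ, Fin.rev_rev, segment_symm]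
    exact hi
  · rintro ⟨i, hi⟩
    refine ⟨i.rev, ?_⟩
    rw [Fin.rev_castSucc, Fin.rev_succ, segment_symm] at hi
    exact hi

lemma IsPolyPath.prepend {γ : Set (ℝ × ℝ)} {x y : ℝ × ℝ} (h : IsPolyPath γ x y) (w : ℝ × ℝ) :
    IsPolyPath (segment ℝ w x ∪ γ) w y := by
  obtain ⟨n, p, h0, hl, hγ⟩ := h
  refine ⟨n + 1, Fin.cons w p, Fin.cons_zero _ _, ?_, ?_⟩
  · rw [← Fin.succ_last, Fin.cons_succ, hl]
  · rw [iUnion_fin_succ' (n+1) (fun i => segment ℝ ((Fin.cons w p : Fin (n+3) → ℝ × ℝ) i.castSucc) ((Fin.cons w p : Fin (n+3) → ℝ × ℝ) i.succ))]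
    rw [hγ]
    congr 1
    show segment ℝ w x = segment ℝ w (p 0)
    rw [h0]

lemma polyPath_mem_endpoints {γ : Set (ℝ × ℝ)} {x y : ℝ × ℝ} (h : IsPolyPath γ x y) :
    x ∈ γ ∧ y ∈ γ := by
  obtain ⟨n, p, h0, hl, hγ⟩ := h
  subst hγ
  constructor
  · exact mem_iUnion.2 ⟨0, by rw [Fin.castSucc_zero, h0]; exact left_mem_segment ℝ x _⟩
  · exact mem_iUnion.2 ⟨Fin.last n, by rw [Fin.succ_last, hl]; exact right_mem_segment ℝ _ y⟩

lemma polyPath_preconnected_aux : ∀ (n : ℕ) (p : Fin (n+2) → ℝ × ℝ),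
    IsPreconnected (⋃ i : Fin (n+1), segment ℝ (p i.castSucc) (p i.succ)) := by
  intro n
  induction n with
  | zero =>
    intro p
    have : (⋃ i : Fin 1, segment ℝ (p i.castSucc) (p i.succ)) = segment ℝ (p 0) (p 1) := by
      ext w; simp [Fin.exists_fin_one]
    rw [this]
    exact (convex_segment _ _).isPreconnected
  | succ n ih =>
    intro p
    rw [iUnion_fin_last' (n+1) (fun i => segment ℝ (p i.castSucc) (p i.succ))]
    have hleft : (⋃ i : Fin (n+1), segment ℝ (p i.castSucc.castSucc) (p i.castSucc.succ))
        = ⋃ i : Fin (n+1), segment ℝ ((p ∘ Fin.castSucc) i.castSucc) ((p ∘ Fin.castSucc) i.succ) := by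
      apply iUnion_congr
      intro i
      simp only [Function.comp_apply, Fin.succ_castSucc]
    apply IsPreconnected.union (p ((Fin.last (n+1)).castSucc))
    · rw [hleft]
      refine mem_iUnion.2 ⟨Fin.last n, ?_⟩
      have : (p ∘ Fin.castSucc) ((Fin.last n).succ) = p ((Fin.last (n+1)).castSucc) := by
        simp [Fin.succ_last]
      rw [← this]
      exact right_mem_segment ℝ _ _
    · exact left_mem_segment ℝ _ _
    · rw [hleft]; exact ih (p ∘ Fin.castSucc)
    · exact (convex_segment _ _).isPreconnected

lemma IsPolyPath.isPreconnected {γ : Set (ℝ × ℝ)} {x y : ℝ × ℝ} (h : IsPolyPath γ x y) :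
    IsPreconnected γ := by
  obtain ⟨n, p, -, -, hγ⟩ := h
  rw [hγ]; exact polyPath_preconnected_aux n p


lemma mem_segment_iff_param {w x y : ℝ × ℝ} :
    w ∈ segment ℝ x y ↔ ∃ θ : ℝ, 0 ≤ θ ∧ θ ≤ 1 ∧ w = x + θ • (y - x) := by
  rw [segment_eq_image']
  constructor
  · rintro ⟨θ, ⟨h0, h1⟩, rfl⟩; exact ⟨θ, h0, h1, rfl⟩
  · rintro ⟨θ, h0, h1, rfl⟩; exact ⟨θ, ⟨h0, h1⟩, rfl⟩

lemma truncate_polyPath (n : ℕ) (p : Fin (n+2) → ℝ × ℝ) (z : ℝ × ℝ) (δ : ℝ) (hδ : 0 < δ)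
    (hlast : p (Fin.last (n+1)) = z) (h0 : p 0 ≠ z) :
    ∃ (γ₁ : Set (ℝ × ℝ)) (q : ℝ × ℝ), IsPolyPath γ₁ (p 0) q ∧
      γ₁ ⊆ (⋃ i : Fin (n+1), segment ℝ (p i.castSucc) (p i.succ)) \ {z} ∧ ‖q - z‖ < δ := by
  classical
  have hex : ∃ k : ℕ, ∃ hk : k < n + 1,
      z ∈ segment ℝ (p ⟨k, by omega⟩) (p ⟨k+1, by omega⟩) := by
    refine ⟨n, by omega, ?_⟩
    have : p ⟨n+1, by omega⟩ = z := by rw [← hlast]; rfl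
    rw [this]
    exact right_mem_segment ℝ _ _
  set i := Nat.find hex with hi_def
  obtain ⟨hi, hzi⟩ := Nat.find_spec hex
  have hmin : ∀ k < i, ∀ hk : k < n + 1,
      z ∉ segment ℝ (p ⟨k, by omega⟩) (p ⟨k+1, by omega⟩) := by
    intro k hk hk' hmem
    exact Nat.find_min hex hk ⟨hk', hmem⟩
  set a : ℝ × ℝ := p ⟨i, by omega⟩ with ha_def
  set b : ℝ × ℝ := p ⟨i+1, by omega⟩ with hb_def
  have haz : a ≠ z := by
    intro h
    rcases Nat.eq_zero_or_pos i with h0' | hpos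
    · apply h0
      have e : (⟨i, by omega⟩ : Fin (n+2)) = 0 := by
        apply Fin.ext; simp [h0']
      rw [ha_def, e] at h
      exact h
    · have hk : i - 1 < n + 1 := by omega
      apply hmin (i-1) (by omega) hk
      have e : (⟨i - 1 + 1, by omega⟩ : Fin (n+2)) = ⟨i, by omega⟩ := by
        apply Fin.ext; simp; omega
      rw [e, ← ha_def, h]
      exact right_mem_segment ℝ _ _
  -- parametrize z on segment a b
  obtain ⟨c, hc0, hc1, hz_eq⟩ := mem_segment_iff_param.1 hzi
  have hcpos : 0 < c := by
    rcases hc0.lt_or_eq with h | h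
    · exact h
    · exfalso; apply haz; rw [hz_eq, ← h, zero_smul, add_zero]
  have hD : 0 < ‖z - a‖ := by
    rw [norm_sub_pos_iff]; exact fun h => haz h.symm
  set D := ‖z - a‖ with hD_def
  set τ : ℝ := c * (1 - min δ D / (2 * D)) with hτ_def
  have hfrac0 : 0 < min δ D / (2 * D) := by positivity
  have hfrac1 : min δ D / (2 * D) ≤ 1 / 2 := by
    rw [div_le_div_iff₀ (by positivity) (by norm_num)]
    nlinarith [min_le_right δ D]
  have hτ0 : 0 ≤ τ := by nlinarith
  have hτc : τ < c := by nlinarith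
  have hτ1 : τ ≤ 1 := by nlinarith
  set q : ℝ × ℝ := a + τ • (b - a) with hq_def
  have hqab : q ∈ segment ℝ a b := mem_segment_iff_param.2 ⟨τ, hτ0, hτ1, rfl⟩
  have hzD : z - a = c • (b - a) := by rw [hz_eq]; abel
  have hba : c * ‖b - a‖ = D := by
    rw [hD_def, hzD, norm_smul, Real.norm_eq_abs, abs_of_pos hcpos]
  have hqz : ‖q - z‖ < δ := by
    have h6 : q - z = (τ - c) • (b - a) := by rw [hq_def, hz_eq]; module
    rw [h6, norm_smul, Real.norm_eq_abs, abs_of_neg (by linarith : τ - c < 0)]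
    have h7 : -(τ - c) * ‖b - a‖ = (min δ D / (2*D)) * (c * ‖b - a‖) := by rw [hτ_def]; ring
    rw [h7, hba]
    have h8 : min δ D / (2*D) * D = min δ D / 2 := by field_simp
    rw [h8]
    have := min_le_left δ D
    linarith
  have hznq : ∀ w ∈ segment ℝ a q, w ≠ z := by
    intro w hw hwz
    obtain ⟨σ, hσ0, hσ1, hw_eq⟩ := mem_segment_iff_param.1 hw
    have hqa : q - a = τ • (b - a) := by rw [hq_def]; abel
    have h1 : (σ * τ) • (b - a) = c • (b - a) := by
      have h2 : a + (σ * τ) • (b - a) = a + c • (b - a) := by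
        rw [← hz_eq, ← hwz, hw_eq, hqa, smul_smul]
      exact add_left_cancel h2
    have h5 : σ * τ ≤ τ := mul_le_of_le_one_left hτ0 hσ1
    have hστ : σ * τ - c ≠ 0 := by intro h; linarith
    have hba0 : b - a = 0 := by
      have h3 : (σ * τ - c) • (b - a) = 0 := by rw [sub_smul, h1, sub_self]
      rcases smul_eq_zero.1 h3 with h4 | h4
      · exact absurd h4 hστ
      · exact h4
    apply haz
    rw [hz_eq, hba0, smul_zero, add_zero]
  set P : Fin (i+2) → ℝ × ℝ := fun j => if h : (j : ℕ) ≤ i then p ⟨j.1, by omega⟩ else q with hP_def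
  refine ⟨⋃ j : Fin (i+1), segment ℝ (P j.castSucc) (P j.succ), q, ⟨i, P, ?_, ?_, rfl⟩, ?_, hqz⟩
  · show P 0 = p 0
    simp only [hP_def]
    rw [dif_pos (by simp : ((0 : Fin (i+2)) : ℕ) ≤ i)]
    exact congrArg p (Fin.ext rfl)
  · show P (Fin.last (i+1)) = q
    simp only [hP_def]
    rw [dif_neg (by simp [Fin.last])]
  · intro w hw
    obtain ⟨j, hj⟩ := mem_iUnion.1 hw
    have hji : (j : ℕ) ≤ i := by omega
    have hcast : P j.castSucc = p ⟨j.1, by omega⟩ := by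
      simp only [hP_def]
      rw [dif_pos (show ((j.castSucc : Fin (i+2)) : ℕ) ≤ i from hji)]
      exact congrArg p (Fin.ext rfl)
    rcases Nat.lt_or_ge (j : ℕ) i with hlt | hge
    · have hsucc : P j.succ = p ⟨j.1+1, by omega⟩ := by
        simp only [hP_def]
        rw [dif_pos (show ((j.succ : Fin (i+2)) : ℕ) ≤ i from by simpa using hlt)]
        exact congrArg p (Fin.ext rfl)
      rw [hcast, hsucc] at hj
      refine ⟨mem_iUnion.2 ⟨⟨j.1, by omega⟩, hj⟩, ?_⟩
      simp only [mem_singleton_iff]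
      exact fun hwz => hmin j.1 hlt (by omega) (hwz ▸ hj)
    · have hji' : (j : ℕ) = i := by omega
      have hsucc : P j.succ = q := by
        simp only [hP_def]
        rw [dif_neg (show ¬ ((j.succ : Fin (i+2)) : ℕ) ≤ i from by simp [hji'])]
      rw [hcast, hsucc] at hj
      have hja : p ⟨j.1, by omega⟩ = a := by
        rw [ha_def]
        exact congrArg p (Fin.ext (by simp [hji']))
      rw [hja] at hj
      have hj' : w ∈ segment ℝ a b := (convex_segment a b).segment_subset (left_mem_segment ℝ a b) hqab hj
      refine ⟨mem_iUnion.2 ⟨⟨i, hi⟩, ?_⟩, ?_⟩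
      · exact hj'
      · simp only [mem_singleton_iff]
        exact hznq w hj

lemma seg_ray_mem {c v w : ℝ × ℝ} {A B : ℝ}
    (hw : w ∈ segment ℝ (c + A • v) (c + B • v)) :
    ∃ μ : ℝ, min A B ≤ μ ∧ μ ≤ max A B ∧ w = c + μ • v := by
  obtain ⟨θ, h0, h1, hw⟩ := mem_segment_iff_param.1 hw
  refine ⟨A + θ * (B - A), ?_, ?_, ?_⟩
  · rcases le_total A B with hab | hab
    · rw [min_eq_left hab]; nlinarith
    · rw [min_eq_right hab]; nlinarith
  · rcases le_total A B with hab | hab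
    · rw [max_eq_right hab]; nlinarith
    · rw [max_eq_left hab]; nlinarith
  · rw [hw]; module

/-- Setting: `Ω` a bounded simply connected domain in `ℝ²`
(uniform norm; `Metric.ball` is an open axis-parallel square), `S = ball cS R ⊆ Ω`
with `∂S ∩ ∂Ω ≠ ∅`, `B ∈ Ω ∖ S̄`; `G_B := connectedComponentIn (Ω ∖ S̄) B`;
`T_B` the component of `∂S ∩ Ω` associated to `G_B`; for `z ∈ T_B`,
`K(z) = ball (z + (r_z/R)•(z - cS)) r_z` with `r_z` the maximal admissible radius.
Conclusion: every `u ∈ K(z)̄ ∩ Ω` can be joined to `B` by a polygonal path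
`γ ⊆ Ω` with `(γ ∖ {u}) ∩ S̄ = ∅`; in particular `K(z) ⊆ G_B`. -/
theorem maximal_square_in_GB
    (Ω : Set (ℝ × ℝ)) (hΩo : IsOpen Ω) (hΩconn : IsConnected Ω)
    (hΩbdd : Bornology.IsBounded Ω) (hΩsc : SimplyConnectedSpace Ω)
    (cS : ℝ × ℝ) (R : ℝ) (hR : 0 < R)
    (hS : Metric.ball cS R ⊆ Ω)
    (hbd : (frontier (Metric.ball cS R) ∩ frontier Ω).Nonempty)
    (B : ℝ × ℝ) (hB : B ∈ Ω \ closure (Metric.ball cS R))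
    (TB : Set (ℝ × ℝ))
    (hTBcomp : ∃ t ∈ frontier (Metric.ball cS R) ∩ Ω,
      TB = connectedComponentIn (frontier (Metric.ball cS R) ∩ Ω) t)
    (hTBassoc : ∀ x ∈ connectedComponentIn (Ω \ closure (Metric.ball cS R)) B,
      ∀ y ∈ TB, ∃ γ : Set (ℝ × ℝ), IsPolyPath γ x y ∧
        γ \ {y} ⊆ connectedComponentIn (Ω \ closure (Metric.ball cS R)) B)
    (z : ℝ × ℝ) (hz : z ∈ TB)
    (rz : ℝ) (hrz : 0 < rz)
    (hKz : Metric.ball (z + (rz / R) • (z - cS)) rz ⊆ Ω)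
    (hKzmax : ∀ ρ : ℝ, 0 < ρ → Metric.ball (z + (ρ / R) • (z - cS)) ρ ⊆ Ω → ρ ≤ rz) :
    (∀ u ∈ closure (Metric.ball (z + (rz / R) • (z - cS)) rz) ∩ Ω,
      ∃ γ : Set (ℝ × ℝ), IsPolyPath γ u B ∧ γ ⊆ Ω ∧
        (γ \ {u}) ∩ closure (Metric.ball cS R) = ∅) ∧
    Metric.ball (z + (rz / R) • (z - cS)) rz ⊆
      connectedComponentIn (Ω \ closure (Metric.ball cS R)) B := by
  classical
  obtain ⟨t0, ht0, hTBdef⟩ := hTBcomp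
  have hzmem : z ∈ frontier (ball cS R) ∩ Ω := by
    rw [hTBdef] at hz; exact connectedComponentIn_subset _ _ hz
  have hzΩ : z ∈ Ω := hzmem.2
  have hzsph : ‖z - cS‖ = R := by
    have h1 := hzmem.1
    rw [frontier_ball cS (ne_of_gt hR)] at h1
    simpa [mem_sphere_iff_norm] using h1
  have hclos : closure (ball cS R) = closedBall cS R := closure_ball cS (ne_of_gt hR)
  set cz := z + (rz / R) • (z - cS) with hcz
  have hczd : ‖cz - cS‖ = R + rz := by
    have e : cz - cS = (1 + rz / R) • (z - cS) := by rw [hcz]; module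
    rw [e, norm_smul, Real.norm_eq_abs, abs_of_pos (by positivity), hzsph]
    field_simp
  have hKS : ∀ w, w ∈ ball cz rz → w ∉ closure (ball cS R) := by
    intro w hw hw'
    rw [hclos] at hw'
    have t1 : dist cz cS ≤ dist cz w + dist w cS := dist_triangle _ _ _
    have t2 : dist cz w < rz := by rw [dist_comm]; exact mem_ball.1 hw
    have t3 : dist w cS ≤ R := mem_closedBall.1 hw'
    rw [dist_eq_norm, hczd] at t1
    linarith
  set G := connectedComponentIn (Ω \ closure (ball cS R)) B with hGdef
  have hGsub : G ⊆ Ω \ closure (ball cS R) := connectedComponentIn_subset _ _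
  have hBG : B ∈ G := mem_connectedComponentIn hB
  obtain ⟨ε, hεpos, hεball⟩ := Metric.isOpen_iff.1 hΩo z hzΩ
  set h := ε / 4 with hh
  have hhpos : 0 < h := by positivity
  set δ := h * R / (8 * (R + h)) with hδdef
  have hδpos : 0 < δ := by positivity
  have hδh : δ ≤ h / 8 := by
    rw [hδdef, div_le_div_iff₀ (by positivity) (by norm_num)]
    nlinarith
  set s := min δ rz with hsdef
  have hspos : 0 < s := lt_min hδpos hrz
  have hsrz : s ≤ rz := min_le_right _ _
  have hsδ : s ≤ δ := min_le_left _ _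
  set ys := z + (s / R) • (z - cS) with hysdef
  set z' := z + (h / R) • (z - cS) with hz'def
  have hz'norm : ‖z' - cS‖ = R + h := by
    have e : z' - cS = (1 + h / R) • (z - cS) := by rw [hz'def]; module
    rw [e, norm_smul, Real.norm_eq_abs, abs_of_pos (by positivity), hzsph]
    field_simp
  have hz'z : ‖z' - z‖ = h := by
    have e : z' - z = (h / R) • (z - cS) := by rw [hz'def]; module
    rw [e, norm_smul, Real.norm_eq_abs, abs_of_pos (by positivity), hzsph]
    field_simp
  have hysK : ys ∈ ball cz rz := by
    rw [mem_ball, dist_eq_norm]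
    have e : ys - cz = ((s - rz) / R) • (z - cS) := by rw [hysdef, hcz]; module
    rw [e, norm_smul, Real.norm_eq_abs, abs_div, abs_of_pos hR, hzsph]
    rw [div_mul_cancel₀ _ (ne_of_gt hR), abs_of_nonpos (sub_nonpos.2 hsrz)]
    linarith
  obtain ⟨γ₀, hγ₀path, hγ₀sub⟩ := hTBassoc B hBG z hz
  obtain ⟨n, p, hp0, hpl, hγ₀eq⟩ := hγ₀path
  have hBz : p 0 ≠ z := by
    rw [hp0]
    intro hBz
    exact hB.2 (hBz ▸ frontier_subset_closure hzmem.1)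
  obtain ⟨γ₁, q, hγ₁path, hγ₁sub, hqz⟩ := truncate_polyPath n p z δ hδpos hpl hBz
  rw [hp0] at hγ₁path
  rw [← hγ₀eq] at hγ₁sub
  have hγ₁G : γ₁ ⊆ G := fun w hw => hγ₀sub (hγ₁sub hw)
  have hqG : q ∈ G := hγ₁G (polyPath_mem_endpoints hγ₁path).2
  have hqΩ : q ∈ Ω := (hGsub hqG).1
  have haq : R < ‖q - cS‖ := by
    have h2 := (hGsub hqG).2
    rw [hclos, mem_closedBall, dist_eq_norm] at h2
    linarith [not_le.1 h2]
  have haq2 : ‖q - cS‖ ≤ R + δ := by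
    calc ‖q - cS‖ = ‖(q - z) + (z - cS)‖ := by rw [sub_add_sub_cancel]
      _ ≤ ‖q - z‖ + ‖z - cS‖ := norm_add_le _ _
      _ ≤ R + δ := by rw [hzsph]; linarith
  set aq := ‖q - cS‖ with haqdef
  have haqpos : 0 < aq := lt_trans hR haq
  set lamq := (R + h) / aq with hlamqdef
  have hlamqpos : 0 < lamq := by positivity
  have hlamq_le : lamq ≤ (R + h) / R := by
    apply div_le_div_of_nonneg_left (by positivity) hR (le_of_lt haq)
  set qstar := cS + lamq • (q - cS) with hqstardef
  -- distance from qstar to z'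
  have hqsz' : ‖qstar - z'‖ ≤ h / 4 := by
    have e1 : qstar - z' = lamq • (q - z) + (lamq - (R + h) / R) • (z - cS) := by
      rw [hqstardef, hz'def]
      match_scalars <;> (field_simp; try ring)
    have e2 : (R + h) / R - lamq = (R + h) * (aq - R) / (R * aq) := by
      rw [hlamqdef]; field_simp
    have e3 : |lamq - (R + h) / R| ≤ (R + h) * δ / (R * R) := by
      rw [abs_of_nonpos (by linarith), neg_sub, e2, div_le_div_iff₀ (by positivity) (by positivity)]
      have k1 : aq - R ≤ δ := by linarith
      calc (R + h) * (aq - R) * (R * R) ≤ (R + h) * δ * (R * R) := by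
            nlinarith [mul_le_mul_of_nonneg_left k1 (by positivity : (0:ℝ) ≤ (R + h) * (R * R))]
        _ ≤ (R + h) * δ * (R * aq) := by
            nlinarith [mul_le_mul_of_nonneg_left (le_of_lt haq) (by positivity : (0:ℝ) ≤ (R + h) * δ * R)]
    calc ‖qstar - z'‖ ≤ ‖lamq • (q - z)‖ + ‖(lamq - (R + h) / R) • (z - cS)‖ := by
          rw [e1]; exact norm_add_le _ _
      _ = |lamq| * ‖q - z‖ + |lamq - (R + h) / R| * R := by
          rw [norm_smul, norm_smul, Real.norm_eq_abs, Real.norm_eq_abs, hzsph]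
      _ ≤ ((R + h) / R) * δ + ((R + h) * δ / (R * R)) * R := by
          apply add_le_add
          · apply mul_le_mul (by rw [abs_of_pos hlamqpos]; exact hlamq_le) (le_of_lt hqz) (norm_nonneg _) (by positivity)
          · exact mul_le_mul_of_nonneg_right e3 (le_of_lt hR)
      _ = 2 * δ * (R + h) / R := by field_simp; ring
      _ = h / 4 := by rw [hδdef]; field_simp; ring
  -- piece 2 : segment ys z'
  have piece2 : ∀ w ∈ segment ℝ ys z', R < ‖w - cS‖ ∧ ‖w - z‖ < ε := by
    intro w hw
    have eys : ys = cS + (1 + s / R) • (z - cS) := by rw [hysdef]; module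
    have ez' : z' = cS + (1 + h / R) • (z - cS) := by rw [hz'def]; module
    rw [eys, ez'] at hw
    obtain ⟨μ, hμ1, hμ2, rfl⟩ := seg_ray_mem hw
    have hsh : s / R ≤ h / R := by gcongr; linarith
    rw [min_eq_left (by linarith)] at hμ1
    rw [max_eq_right (by linarith)] at hμ2
    have hsR : 0 < s / R := by positivity
    constructor
    · rw [add_sub_cancel_left, norm_smul, Real.norm_eq_abs, abs_of_pos (by linarith), hzsph]
      nlinarith
    · have e2 : cS + μ • (z - cS) - z = (μ - 1) • (z - cS) := by module
      rw [e2, norm_smul, Real.norm_eq_abs, abs_of_nonneg (by linarith), hzsph]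
      have k2 : (μ - 1) * R ≤ (h / R) * R := by nlinarith
      have k3 : (h / R) * R = h := by field_simp
      have hεh : h < ε := by rw [hh]; linarith
      linarith
  have hεh : h < ε := by rw [hh]; linarith
  have piece3 : ∀ w ∈ segment ℝ z' qstar, R < ‖w - cS‖ ∧ ‖w - z‖ < ε := by
    intro w hw
    obtain ⟨θ, h0, h1, rfl⟩ := mem_segment_iff_param.1 hw
    have hwz' : ‖z' + θ • (qstar - z') - z'‖ ≤ h / 4 := by
      rw [add_sub_cancel_left, norm_smul, Real.norm_eq_abs, abs_of_nonneg h0]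
      calc θ * ‖qstar - z'‖ ≤ 1 * (h / 4) :=
            mul_le_mul h1 hqsz' (norm_nonneg _) one_pos.le
        _ = h / 4 := one_mul _
    constructor
    · have t1 : dist z' cS ≤ dist z' (z' + θ • (qstar - z')) + dist (z' + θ • (qstar - z')) cS :=
        dist_triangle _ _ _
      rw [dist_eq_norm, dist_eq_norm, dist_eq_norm, hz'norm, norm_sub_rev] at t1
      linarith
    · have t1 : dist (z' + θ • (qstar - z')) z ≤ dist (z' + θ • (qstar - z')) z' + dist z' z :=
        dist_triangle _ _ _
      rw [dist_eq_norm, dist_eq_norm, dist_eq_norm, hz'z] at t1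
      linarith
  have piece4 : ∀ w ∈ segment ℝ qstar q, R < ‖w - cS‖ ∧ ‖w - z‖ < ε := by
    intro w hw
    have eq1 : q = cS + (1:ℝ) • (q - cS) := by module
    rw [hqstardef] at hw
    nth_rewrite 2 [eq1] at hw
    obtain ⟨μ, hμ1, hμ2, rfl⟩ := seg_ray_mem hw
    have hminpos : 0 < min lamq 1 := lt_min hlamqpos one_pos
    have hμpos : 0 < μ := lt_of_lt_of_le hminpos hμ1
    have hlam_aq : lamq * aq = R + h := by rw [hlamqdef]; field_simp
    constructor
    · rw [add_sub_cancel_left, norm_smul, Real.norm_eq_abs, abs_of_pos hμpos, ← haqdef]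
      rcases le_total lamq 1 with hc | hc
      · rw [min_eq_left hc] at hμ1
        nlinarith
      · rw [min_eq_right hc] at hμ1
        nlinarith
    · have e2 : cS + μ • (q - cS) - z = (μ - 1) • (q - cS) + (q - z) := by module
      rw [e2]
      have t1 : ‖(μ - 1) • (q - cS) + (q - z)‖ ≤ |μ - 1| * aq + ‖q - z‖ := by
        calc ‖(μ - 1) • (q - cS) + (q - z)‖ ≤ ‖(μ - 1) • (q - cS)‖ + ‖q - z‖ := norm_add_le _ _
          _ = |μ - 1| * aq + ‖q - z‖ := by rw [norm_smul, Real.norm_eq_abs, ← haqdef]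
      have t2 : |μ - 1| ≤ |lamq - 1| := by
        rcases le_total lamq 1 with hc | hc
        · rw [min_eq_left hc] at hμ1; rw [max_eq_right hc] at hμ2
          rw [abs_of_nonpos (by linarith), abs_of_nonpos (by linarith)]; linarith
        · rw [min_eq_right hc] at hμ1; rw [max_eq_left hc] at hμ2
          rw [abs_of_nonneg (by linarith), abs_of_nonneg (by linarith)]; linarith
      have t3 : |lamq - 1| * aq = |R + h - aq| := by
        have e3 : (lamq - 1) * aq = R + h - aq := by rw [hlamqdef]; field_simp
        calc |lamq - 1| * aq = |lamq - 1| * |aq| := by rw [abs_of_pos haqpos]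
          _ = |(lamq - 1) * aq| := (abs_mul _ _).symm
          _ = |R + h - aq| := by rw [e3]
      have t4 : |R + h - aq| ≤ h := by
        rw [abs_le]; constructor <;> linarith
      have t5 : |μ - 1| * aq ≤ h := by
        calc |μ - 1| * aq ≤ |lamq - 1| * aq := by nlinarith [abs_nonneg (μ - 1)]
          _ = |R + h - aq| := t3
          _ ≤ h := t4
      linarith
  -- main construction
  have key : ∀ u ∈ closure (ball cz rz) ∩ Ω, ∃ γ : Set (ℝ × ℝ), IsPolyPath γ u B ∧ γ ⊆ Ω ∧
      (γ \ {u}) ∩ closure (ball cS R) = ∅ := by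
    intro u hu
    have hpath : IsPolyPath (segment ℝ u ys ∪ (segment ℝ ys z' ∪ (segment ℝ z' qstar ∪
        (segment ℝ qstar q ∪ γ₁)))) u B :=
      ((((hγ₁path.reverse).prepend qstar).prepend z').prepend ys).prepend u
    have hseg1 : ∀ w ∈ segment ℝ u ys, w ≠ u → w ∈ ball cz rz := by
      intro w hw hwu
      have hconv : Convex ℝ (ball cz rz) := convex_ball cz rz
      have hop : openSegment ℝ u ys ⊆ ball cz rz := by
        have h5 := hconv.openSegment_closure_interior_subset_interior hu.1
          (by rw [isOpen_ball.interior_eq]; exact hysK)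
        rwa [isOpen_ball.interior_eq] at h5
      rw [← insert_endpoints_openSegment] at hw
      rcases hw with rfl | hw
      · exact absurd rfl hwu
      rcases hw with rfl | hw
      · exact hysK
      · exact hop hw
    refine ⟨_, hpath, ?_, ?_⟩
    · rintro w (hw | hw | hw | hw | hw)
      · rcases eq_or_ne w u with rfl | hwu
        · exact hu.2
        · exact hKz (hseg1 w hw hwu)
      · exact hεball (by rw [mem_ball, dist_eq_norm]; exact (piece2 w hw).2)
      · exact hεball (by rw [mem_ball, dist_eq_norm]; exact (piece3 w hw).2)
      · exact hεball (by rw [mem_ball, dist_eq_norm]; exact (piece4 w hw).2)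
      · exact (hGsub (hγ₁G hw)).1
    · rw [eq_empty_iff_forall_notMem]
      rintro w ⟨⟨hwγ, hwu⟩, hwS⟩
      have hwu' : w ≠ u := by simpa using hwu
      have hwS' : ‖w - cS‖ ≤ R := by
        rw [hclos, mem_closedBall, dist_eq_norm] at hwS; exact hwS
      rcases hwγ with hw | hw | hw | hw | hw
      · exact hKS w (hseg1 w hw hwu') hwS
      · linarith [(piece2 w hw).1]
      · linarith [(piece3 w hw).1]
      · linarith [(piece4 w hw).1]
      · exact (hGsub (hγ₁G hw)).2 hwS
  refine ⟨key, ?_⟩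
  intro w hw
  obtain ⟨γ, hpath, hΩ', hint⟩ := key w ⟨subset_closure hw, hKz hw⟩
  have hγsub : γ ⊆ Ω \ closure (ball cS R) := by
    intro x hx
    refine ⟨hΩ' hx, ?_⟩
    rcases eq_or_ne x w with rfl | hxw
    · exact hKS x hw
    · intro hxS
      rw [eq_empty_iff_forall_notMem] at hint
      exact hint x ⟨⟨hx, by simpa using hxw⟩, hxS⟩
  exact hpath.isPreconnected.subset_connectedComponentIn (polyPath_mem_endpoints hpath).2 hγsub
    (polyPath_mem_endpoints hpath).1
end

section
/- Let Ω ⊂ ℝ² be a bounded domain, let S = S(c_S,R) ⊂ Ω be a square, and let [a,b] be a closed side of S. Let z, y ∈ [a,b] ∩ Ω with z ≠ y, and let r_z, r_y denote the radii of the maximal squares K(z), K(y). Then: (i) if z, y ∈ (a,b), then |r_y − r_z| ≤ (R + r_y + r_z)·‖y−z‖ / dist({z,y},{a,b}); (ii) if z ∈ {a,b} and y ∈ (a,b), then r_y ≤ r_z + (R + r_z)·‖y−z‖ / ‖y−h‖, where h denotes the endpoint of [a,b] different from z. -/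
open Set Metric

private lemma min_abs_aux (R t : ℝ) (h : |t| ≤ R) : min |t + R| |t - R| = R - |t| := by
  rcases le_total 0 t with h0 | h0
  · rw [abs_of_nonneg h0] at h ⊢
    rw [abs_of_nonneg (by linarith : (0:ℝ) ≤ t + R),
      abs_of_nonpos (by linarith : t - R ≤ 0), min_eq_right (by linarith)]
    ring
  · rw [abs_of_nonpos h0] at h ⊢
    rw [abs_of_nonneg (by linarith : (0:ℝ) ≤ t + R),
      abs_of_nonpos (by linarith : t - R ≤ 0), min_eq_left (by linarith)]
    ring

private lemma key1 (R t s ry rz : ℝ) (hR : 0 < R) (ht : |t| < R) (hry : 0 < ry)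
    (hrz : 0 < rz) (hts : t ≠ s)
    (H : ∀ ρ : ℝ, 0 < ρ → ρ ≤ ry → |t * (1 + ρ / R) - s * (1 + ry / R)| ≤ ry - ρ → ρ ≤ rz) :
    ry - rz ≤ (R + ry) * |s - t| / (R - |t|) := by
  have habs := abs_nonneg t
  have hd : 0 < R - |t| := by linarith
  have hδ : 0 < |s - t| := abs_pos.mpr (sub_ne_zero.mpr (Ne.symm hts))
  set q := (R + ry) * |s - t| / (R - |t|) with hqdef
  have hq0 : 0 < q := by positivity
  have hqd : q * (R - |t|) = (R + ry) * |s - t| := by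
    rw [hqdef]; field_simp
  rcases le_or_gt ry q with hcase | hcase
  · linarith
  · have hρ : (0:ℝ) < ry - q := by linarith
    have h1 : ry - q ≤ rz := by
      apply H (ry - q) hρ (by linarith)
      have e : t * (1 + (ry - q) / R) - s * (1 + ry / R)
          = ((t - s) * (R + ry) - t * q) / R := by
        field_simp; ring
      rw [e, show ry - (ry - q) = q by ring, abs_div, abs_of_pos hR, div_le_iff₀ hR]
      calc |(t - s) * (R + ry) - t * q| ≤ |(t - s) * (R + ry)| + |t * q| := abs_sub _ _
        _ = |s - t| * (R + ry) + |t| * q := by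
            rw [abs_mul, abs_mul, abs_of_pos (by linarith : (0:ℝ) < R + ry),
              abs_of_pos hq0, abs_sub_comm]
        _ ≤ q * R := by nlinarith [hqd]
    linarith

private lemma key2 (R s ry rz : ℝ) (hR : 0 < R) (hs : |s| < R) (hry : 0 < ry) (hrz : 0 < rz)
    (H : ∀ ρ : ℝ, 0 < ρ → ρ ≤ ry → |(-R) * (1 + ρ / R) - s * (1 + ry / R)| ≤ ry - ρ → ρ ≤ rz) :
    ry ≤ rz + (R + rz) * (R + s) / (R - s) := by
  rw [abs_lt] at hs
  obtain ⟨hs1, hs2⟩ := hs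
  have hd : 0 < R - s := by linarith
  have main : ry * (R - s) ≤ rz * (R - s) + (R + rz) * (R + s) := by
    set ρ := ((R - s) * ry - R * (R + s)) / (2 * R) with hρdef
    have hρd : ρ * (2 * R) = (R - s) * ry - R * (R + s) := by
      rw [hρdef]; field_simp
    rcases le_or_gt ρ 0 with hρ | hρ
    · nlinarith
    · have h1 : ρ ≤ rz := by
        apply H ρ hρ (by nlinarith)
        have e : (-R) * (1 + ρ / R) - s * (1 + ry / R)
            = -(((R + ρ) * R + s * (R + ry)) / R) := by field_simp; ring
        rw [e, abs_neg, abs_div, abs_of_pos hR, div_le_iff₀ hR]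
        rw [abs_le]
        constructor
        · nlinarith [mul_pos (show (0:ℝ) < R + s by linarith)
            (show (0:ℝ) < R + ry by linarith)]
        · nlinarith
      nlinarith
  have h2 : ry - rz ≤ (R + rz) * (R + s) / (R - s) := (le_div_iff₀ hd).mpr (by nlinarith)
  linarith

private lemma transfer (Ω : Set (ℝ × ℝ)) (cS u m z y : ℝ × ℝ) (R rz ry t s : ℝ)
    (hR : 0 < R)
    (hnorm : ∀ α β : ℝ, ‖α • u + β • m‖ = max |α| (R * |β|))
    (hzd : z = cS + (m + t • u)) (hyd : y = cS + (m + s • u))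
    (hKy : ball (y + (ry / R) • (y - cS)) ry ⊆ Ω)
    (hKzmax : ∀ ρ : ℝ, 0 < ρ → ball (z + (ρ / R) • (z - cS)) ρ ⊆ Ω → ρ ≤ rz) :
    ∀ ρ : ℝ, 0 < ρ → ρ ≤ ry → |t * (1 + ρ / R) - s * (1 + ry / R)| ≤ ry - ρ → ρ ≤ rz := by
  intro ρ hρ hρry habs
  apply hKzmax ρ hρ
  refine Subset.trans (ball_subset_ball' ?_) hKy
  have hdiff : (z + (ρ / R) • (z - cS)) - (y + (ry / R) • (y - cS))
      = (t * (1 + ρ / R) - s * (1 + ry / R)) • u + ((ρ - ry) / R) • m := by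
    rw [hzd, hyd]; module
  rw [dist_eq_norm, hdiff, hnorm]
  have h2 : R * |(ρ - ry) / R| = ry - ρ := by
    rw [abs_div, abs_of_pos hR, abs_of_nonpos (by linarith : ρ - ry ≤ 0)]
    field_simp
    ring
  rw [h2]
  have h3 := max_le habs (le_refl (ry - ρ))
  linarith

private lemma build_horiz (cS a b : ℝ × ℝ) (R ε σ : ℝ) (hR : 0 < R)
    (hε : ε = 1 ∨ ε = -1) (hσ : σ = 1 ∨ σ = -1)
    (ha1 : a.1 - cS.1 = -(R * ε)) (ha2 : a.2 - cS.2 = σ * R)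
    (hb1 : b.1 - cS.1 = R * ε) (hb2 : b.2 - cS.2 = σ * R) :
    ∃ u m : ℝ × ℝ, (∀ α β : ℝ, ‖α • u + β • m‖ = max |α| (R * |β|)) ∧
      a = cS + (m + (-R) • u) ∧ b = cS + (m + R • u) := by
  refine ⟨(ε, 0), (0, σ * R), ?_, ?_, ?_⟩
  · intro α β
    have h1 : α • ((ε, 0) : ℝ × ℝ) + β • ((0, σ * R) : ℝ × ℝ) = (α * ε, β * (σ * R)) := by
      simp [Prod.ext_iff]
    rw [h1, Prod.norm_def]
    rcases hε with rfl | rfl <;> rcases hσ with rfl | rfl <;>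
      simp [Real.norm_eq_abs, abs_mul, abs_of_pos hR, mul_comm]
  · refine Prod.ext ?_ ?_ <;> simp <;> linarith
  · refine Prod.ext ?_ ?_ <;> simp <;> linarith

private lemma build_vert (cS a b : ℝ × ℝ) (R ε σ : ℝ) (hR : 0 < R)
    (hε : ε = 1 ∨ ε = -1) (hσ : σ = 1 ∨ σ = -1)
    (ha1 : a.1 - cS.1 = σ * R) (ha2 : a.2 - cS.2 = -(R * ε))
    (hb1 : b.1 - cS.1 = σ * R) (hb2 : b.2 - cS.2 = R * ε) :
    ∃ u m : ℝ × ℝ, (∀ α β : ℝ, ‖α • u + β • m‖ = max |α| (R * |β|)) ∧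
      a = cS + (m + (-R) • u) ∧ b = cS + (m + R • u) := by
  refine ⟨(0, ε), (σ * R, 0), ?_, ?_, ?_⟩
  · intro α β
    have h1 : α • ((0, ε) : ℝ × ℝ) + β • ((σ * R, 0) : ℝ × ℝ) = (β * (σ * R), α * ε) := by
      simp [Prod.ext_iff]
    rw [h1, Prod.norm_def]
    rcases hε with rfl | rfl <;> rcases hσ with rfl | rfl <;>
      simp [Real.norm_eq_abs, abs_mul, abs_of_pos hR, mul_comm, max_comm]
  · refine Prod.ext ?_ ?_ <;> simp <;> linarith
  · refine Prod.ext ?_ ?_ <;> simp <;> linarith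

private lemma side_structure (cS : ℝ × ℝ) (R : ℝ) (hR : 0 < R) (a b : ℝ × ℝ)
    (hside : segment ℝ a b ⊆ frontier (ball cS R)) (hlen : dist a b = 2 * R) :
    ∃ u m : ℝ × ℝ, (∀ α β : ℝ, ‖α • u + β • m‖ = max |α| (R * |β|)) ∧
      a = cS + (m + (-R) • u) ∧ b = cS + (m + R • u) := by
  have hf : frontier (ball cS R) = sphere cS R := frontier_ball cS (ne_of_gt hR)
  have hsph : ∀ w ∈ segment ℝ a b, max |w.1 - cS.1| |w.2 - cS.2| = R := by
    intro w hw
    have h1 := hside hw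
    rw [hf, mem_sphere, Prod.dist_eq, Real.dist_eq, Real.dist_eq] at h1
    exact h1
  have ha := hsph a (left_mem_segment ℝ a b)
  have hb := hsph b (right_mem_segment ℝ a b)
  have hmid := hsph ((1/2 : ℝ) • a + (1/2 : ℝ) • b)
    ⟨1/2, 1/2, by norm_num, by norm_num, by norm_num, rfl⟩
  have hmid' : max |(a.1 - cS.1) + (b.1 - cS.1)| |(a.2 - cS.2) + (b.2 - cS.2)| = 2 * R := by
    have e1 : ((1/2 : ℝ) • a + (1/2 : ℝ) • b).1 - cS.1
        = ((a.1 - cS.1) + (b.1 - cS.1)) / 2 := by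
      simp [Prod.smul_fst]; ring
    have e2 : ((1/2 : ℝ) • a + (1/2 : ℝ) • b).2 - cS.2
        = ((a.2 - cS.2) + (b.2 - cS.2)) / 2 := by
      simp [Prod.smul_snd]; ring
    rw [e1, e2, abs_div, abs_div] at hmid
    rw [show |(2:ℝ)| = 2 by norm_num] at hmid
    rw [max_div_div_right (by norm_num : (0:ℝ) ≤ 2)] at hmid
    linarith [hmid]
  have hlen' : max |a.1 - b.1| |a.2 - b.2| = 2 * R := by
    rw [← Real.dist_eq, ← Real.dist_eq, ← Prod.dist_eq]; exact hlen
  have hp1 : |a.1 - cS.1| ≤ R := (le_max_left _ _).trans ha.le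
  have hp2 : |a.2 - cS.2| ≤ R := (le_max_right _ _).trans ha.le
  have hq1 : |b.1 - cS.1| ≤ R := (le_max_left _ _).trans hb.le
  have hq2 : |b.2 - cS.2| ≤ R := (le_max_right _ _).trans hb.le
  rw [abs_le] at hp1 hp2 hq1 hq2
  obtain ⟨hp1a, hp1b⟩ := hp1
  obtain ⟨hp2a, hp2b⟩ := hp2
  obtain ⟨hq1a, hq1b⟩ := hq1
  obtain ⟨hq2a, hq2b⟩ := hq2
  rcases max_choice |(a.1 - cS.1) + (b.1 - cS.1)| |(a.2 - cS.2) + (b.2 - cS.2)| with hch | hch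
  · -- first coordinates pinned : vertical side
    have hP : |(a.1 - cS.1) + (b.1 - cS.1)| = 2 * R := hch.symm.trans hmid'
    have hpp : a.1 - cS.1 = b.1 - cS.1 ∧ (a.1 - cS.1 = R ∨ a.1 - cS.1 = -R) := by
      rcases abs_cases ((a.1 - cS.1) + (b.1 - cS.1)) with ⟨h1, _⟩ | ⟨h1, _⟩ <;>
        rw [h1] at hP
      · constructor
        · linarith
        · left; linarith
      · constructor
        · linarith
        · right; linarith
    obtain ⟨hpq, hsgn⟩ := hpp
    have h0 : |a.1 - b.1| = 0 := by
      rw [show a.1 - b.1 = (a.1 - cS.1) - (b.1 - cS.1) by ring, hpq, sub_self, abs_zero]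
    have hV : |a.2 - b.2| = 2 * R := by
      rw [max_eq_right (by rw [h0]; exact abs_nonneg _)] at hlen'
      exact hlen'
    rcases abs_cases (a.2 - b.2) with ⟨h1, _⟩ | ⟨h1, _⟩ <;> rw [h1] at hV
    · -- a.2 - b.2 = 2R : a top, b bottom : ε = -1
      rcases hsgn with hs1 | hs1
      · exact build_vert cS a b R (-1) 1 hR (Or.inr rfl) (Or.inl rfl)
          (by linarith) (by linarith) (by linarith) (by linarith)
      · exact build_vert cS a b R (-1) (-1) hR (Or.inr rfl) (Or.inr rfl)
          (by linarith) (by linarith) (by linarith) (by linarith)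
    · rcases hsgn with hs1 | hs1
      · exact build_vert cS a b R 1 1 hR (Or.inl rfl) (Or.inl rfl)
          (by linarith) (by linarith) (by linarith) (by linarith)
      · exact build_vert cS a b R 1 (-1) hR (Or.inl rfl) (Or.inr rfl)
          (by linarith) (by linarith) (by linarith) (by linarith)
  · -- second coordinates pinned : horizontal side
    have hP : |(a.2 - cS.2) + (b.2 - cS.2)| = 2 * R := hch.symm.trans hmid'
    have hpp : a.2 - cS.2 = b.2 - cS.2 ∧ (a.2 - cS.2 = R ∨ a.2 - cS.2 = -R) := by
      rcases abs_cases ((a.2 - cS.2) + (b.2 - cS.2)) with ⟨h1, _⟩ | ⟨h1, _⟩ <;>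
        rw [h1] at hP
      · constructor
        · linarith
        · left; linarith
      · constructor
        · linarith
        · right; linarith
    obtain ⟨hpq, hsgn⟩ := hpp
    have h0 : |a.2 - b.2| = 0 := by
      rw [show a.2 - b.2 = (a.2 - cS.2) - (b.2 - cS.2) by ring, hpq, sub_self, abs_zero]
    have hV : |a.1 - b.1| = 2 * R := by
      rw [max_eq_left (by rw [h0]; exact abs_nonneg _)] at hlen'
      exact hlen'
    rcases abs_cases (a.1 - b.1) with ⟨h1, _⟩ | ⟨h1, _⟩ <;> rw [h1] at hV
    · rcases hsgn with hs1 | hs1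
      · exact build_horiz cS a b R (-1) 1 hR (Or.inr rfl) (Or.inl rfl)
          (by linarith) (by linarith) (by linarith) (by linarith)
      · exact build_horiz cS a b R (-1) (-1) hR (Or.inr rfl) (Or.inr rfl)
          (by linarith) (by linarith) (by linarith) (by linarith)
    · rcases hsgn with hs1 | hs1
      · exact build_horiz cS a b R 1 1 hR (Or.inl rfl) (Or.inl rfl)
          (by linarith) (by linarith) (by linarith) (by linarith)
      · exact build_horiz cS a b R 1 (-1) hR (Or.inl rfl) (Or.inr rfl)
          (by linarith) (by linarith) (by linarith) (by linarith)

/-- Setting: `Ω ⊂ ℝ²` a bounded domain (uniform norm;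
`Metric.ball` is an open axis-parallel square), `S = ball cS R ⊆ Ω`, `[a,b]` a
closed side of `S` (a segment contained in `∂S` whose endpoints are at uniform
distance `2R`).  For `z, y ∈ [a,b] ∩ Ω`, `z ≠ y`, with maximal squares
`K(z) = ball (z + (r_z/R)•(z-cS)) r_z` and `K(y)` (maximality of the radii
hypothesized):
(i) if `z, y` lie in the open side, `|r_y - r_z| ≤ (R+r_y+r_z)‖y-z‖ / dist({z,y},{a,b})`;
(ii) if `z ∈ {a,b}` and `y` is in the open side then, `h` being the other endpoint,
`r_y ≤ r_z + (R+r_z)‖y-z‖/‖y-h‖`. -/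
theorem maximal_square_radius_comparison
    (Ω : Set (ℝ × ℝ)) (hΩo : IsOpen Ω) (hΩconn : IsConnected Ω)
    (hΩbdd : Bornology.IsBounded Ω)
    (cS : ℝ × ℝ) (R : ℝ) (hR : 0 < R) (hS : Metric.ball cS R ⊆ Ω)
    (a b : ℝ × ℝ)
    (hside : segment ℝ a b ⊆ frontier (Metric.ball cS R))
    (hlen : dist a b = 2 * R)
    (z y : ℝ × ℝ) (hz : z ∈ segment ℝ a b) (hy : y ∈ segment ℝ a b)
    (hzΩ : z ∈ Ω) (hyΩ : y ∈ Ω) (hzy : z ≠ y)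
    (rz : ℝ) (hrz : 0 < rz)
    (hKz : Metric.ball (z + (rz / R) • (z - cS)) rz ⊆ Ω)
    (hKzmax : ∀ ρ : ℝ, 0 < ρ → Metric.ball (z + (ρ / R) • (z - cS)) ρ ⊆ Ω → ρ ≤ rz)
    (ry : ℝ) (hry : 0 < ry)
    (hKy : Metric.ball (y + (ry / R) • (y - cS)) ry ⊆ Ω)
    (hKymax : ∀ ρ : ℝ, 0 < ρ → Metric.ball (y + (ρ / R) • (y - cS)) ρ ⊆ Ω → ρ ≤ ry) :
    (z ∈ openSegment ℝ a b → y ∈ openSegment ℝ a b →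
      |ry - rz| ≤ (R + ry + rz) * ‖y - z‖ /
        min (min (dist z a) (dist z b)) (min (dist y a) (dist y b))) ∧
    (∀ h : ℝ × ℝ, ((z = a ∧ h = b) ∨ (z = b ∧ h = a)) → y ∈ openSegment ℝ a b →
      ry ≤ rz + (R + rz) * ‖y - z‖ / ‖y - h‖) := by
  obtain ⟨u, m, hnorm, ha, hb⟩ := side_structure cS R hR a b hside hlen
  have hdeco : ∀ w ∈ openSegment ℝ a b, ∃ τ : ℝ, |τ| < R ∧ w = cS + (m + τ • u) := by
    rintro w ⟨c, d, hc, hd, hcd, rfl⟩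
    refine ⟨(d - c) * R, ?_, ?_⟩
    · rw [abs_mul, abs_of_pos hR]
      have hdc : |d - c| < 1 := abs_lt.mpr ⟨by linarith, by linarith⟩
      nlinarith
    · rw [ha, hb]
      have hd1 : d = 1 - c := by linarith
      subst hd1
      module
  have hnd : ∀ (τ τ' : ℝ) (w w' : ℝ × ℝ), w = cS + (m + τ • u) → w' = cS + (m + τ' • u) →
      ‖w - w'‖ = |τ - τ'| := by
    intro τ τ' w w' hw hw'
    have h1 : w - w' = (τ - τ') • u + (0:ℝ) • m := by rw [hw, hw']; module
    rw [h1, hnorm]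
    simp [abs_nonneg]
  constructor
  · intro hzo hyo
    obtain ⟨t, ht, hzd⟩ := hdeco z hzo
    obtain ⟨s, hs, hyd⟩ := hdeco y hyo
    have hts : t ≠ s := by
      rintro rfl; exact hzy (by rw [hzd, hyd])
    have Hz := transfer Ω cS u m z y R rz ry t s hR hnorm hzd hyd hKy hKzmax
    have Hy := transfer Ω cS u m y z R ry rz s t hR hnorm hyd hzd hKz hKymax
    have k1 := key1 R t s ry rz hR ht hry hrz hts Hz
    have k2 := key1 R s t rz ry hR hs hrz hry (Ne.symm hts) Hy
    have hda : dist z a = |t + R| := by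
      rw [dist_eq_norm, hnd t (-R) z a hzd ha, sub_neg_eq_add]
    have hdb : dist z b = |t - R| := by
      rw [dist_eq_norm, hnd t R z b hzd hb]
    have hda' : dist y a = |s + R| := by
      rw [dist_eq_norm, hnd s (-R) y a hyd ha, sub_neg_eq_add]
    have hdb' : dist y b = |s - R| := by
      rw [dist_eq_norm, hnd s R y b hyd hb]
    have hyz : ‖y - z‖ = |s - t| := hnd s t y z hyd hzd
    rw [hyz, hda, hdb, hda', hdb', min_abs_aux R t ht.le, min_abs_aux R s hs.le]
    have hDpos : 0 < min (R - |t|) (R - |s|) := lt_min (by linarith) (by linarith)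
    have hnum : (0:ℝ) ≤ (R + ry + rz) * |s - t| := by positivity
    refine abs_sub_le_iff.mpr ⟨?_, ?_⟩
    · calc ry - rz ≤ (R + ry) * |s - t| / (R - |t|) := k1
        _ ≤ (R + ry + rz) * |s - t| / min (R - |t|) (R - |s|) := by
            apply div_le_div₀ hnum (by nlinarith [abs_nonneg (s - t)]) hDpos (min_le_left _ _)
    · calc rz - ry ≤ (R + rz) * |t - s| / (R - |s|) := k2
        _ ≤ (R + ry + rz) * |s - t| / min (R - |t|) (R - |s|) := by
            rw [abs_sub_comm t s]
            apply div_le_div₀ hnum (by nlinarith [abs_nonneg (s - t)]) hDpos (min_le_right _ _)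
  · rintro h (⟨hz1, hh⟩ | ⟨hz1, hh⟩) hyo
    · obtain ⟨s, hs, hyd⟩ := hdeco y hyo
      have hzd : z = cS + (m + (-R : ℝ) • u) := by rw [hz1, ha]
      have Hz := transfer Ω cS u m z y R rz ry (-R) s hR hnorm hzd hyd hKy hKzmax
      have k := key2 R s ry rz hR hs hry hrz Hz
      obtain ⟨hs1, hs2⟩ := abs_lt.mp hs
      have hyz : ‖y - z‖ = |s + R| := by
        rw [hnd s (-R) y z hyd hzd, sub_neg_eq_add]
      have hyh : ‖y - h‖ = |s - R| := by
        rw [hh, hnd s R y b hyd hb]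
      rw [hyz, hyh, abs_of_pos (by linarith : (0:ℝ) < s + R),
        abs_of_neg (by linarith : s - R < 0)]
      rw [show -(s - R) = R - s by ring, show s + R = R + s by ring]
      exact k
    · obtain ⟨s, hs, hyd⟩ := hdeco y hyo
      have hzd : z = cS + (m + (R : ℝ) • u) := by rw [hz1, hb]
      have Hz := transfer Ω cS u m z y R rz ry R s hR hnorm hzd hyd hKy hKzmax
      have Hz' : ∀ ρ : ℝ, 0 < ρ → ρ ≤ ry →
          |(-R) * (1 + ρ / R) - (-s) * (1 + ry / R)| ≤ ry - ρ → ρ ≤ rz := by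
        intro ρ h1 h2 h3
        apply Hz ρ h1 h2
        rw [show R * (1 + ρ / R) - s * (1 + ry / R)
          = -((-R) * (1 + ρ / R) - (-s) * (1 + ry / R)) by ring, abs_neg]
        exact h3
      have k := key2 R (-s) ry rz hR (by rw [abs_neg]; exact hs) hry hrz Hz'
      obtain ⟨hs1, hs2⟩ := abs_lt.mp hs
      have hyz : ‖y - z‖ = |s - R| := hnd s R y z hyd hzd
      have hyh : ‖y - h‖ = |s + R| := by
        rw [hh, hnd s (-R) y a hyd ha, sub_neg_eq_add]
      rw [hyz, hyh, abs_of_neg (by linarith : s - R < 0),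
        abs_of_pos (by linarith : (0:ℝ) < s + R)]
      rw [show -(s - R) = R + -s by ring, show s + R = R - -s by ring]
      exact k
end

section
/- Let Ω ⊂ ℝ² be a bounded domain, let S = S(c_S,R) ⊂ Ω be a square, let T be a connected component of ∂S ∩ Ω, let z ∈ T, and let ε > 0. Then there exists δ > 0 such that for every y ∈ T with ‖y−z‖ < δ one has K(y) ⊂ [K(z)]_ε, where [A]_ε = {u ∈ ℝ² : dist(u,A) < ε} denotes the ε-neighborhood of A. -/
open Set Metric

/-- Setting: `Ω ⊂ ℝ²` a bounded domain (uniform norm;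
`Metric.ball` is an open axis-parallel square), `S = ball cS R ⊆ Ω`, `T` a
connected component of `∂S ∩ Ω`, `z ∈ T`, `ε > 0`; `K(z)`, `K(y)` the maximal
squares attached to `z`, `y` (maximality of the radii hypothesized).  Then there
is `δ > 0` such that `‖y - z‖ < δ`, `y ∈ T`, implies `K(y) ⊆ [K(z)]_ε`
(the `ε`-neighborhood, i.e. `Metric.thickening ε (K z)`). -/
theorem maximal_square_continuity
    (Ω : Set (ℝ × ℝ)) (hΩo : IsOpen Ω) (hΩconn : IsConnected Ω)
    (hΩbdd : Bornology.IsBounded Ω)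
    (cS : ℝ × ℝ) (R : ℝ) (hR : 0 < R) (hS : Metric.ball cS R ⊆ Ω)
    (T : Set (ℝ × ℝ))
    (hT : ∃ t ∈ frontier (Metric.ball cS R) ∩ Ω,
      T = connectedComponentIn (frontier (Metric.ball cS R) ∩ Ω) t)
    (z : ℝ × ℝ) (hz : z ∈ T)
    (rz : ℝ) (hrz : 0 < rz)
    (hKz : Metric.ball (z + (rz / R) • (z - cS)) rz ⊆ Ω)
    (hKzmax : ∀ ρ : ℝ, 0 < ρ → Metric.ball (z + (ρ / R) • (z - cS)) ρ ⊆ Ω → ρ ≤ rz)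
    (ε : ℝ) (hε : 0 < ε) :
    ∃ δ > 0, ∀ y ∈ T, ‖y - z‖ < δ →
      ∀ ry : ℝ, 0 < ry →
        Metric.ball (y + (ry / R) • (y - cS)) ry ⊆ Ω →
        (∀ ρ : ℝ, 0 < ρ → Metric.ball (y + (ρ / R) • (y - cS)) ρ ⊆ Ω → ρ ≤ ry) →
        Metric.ball (y + (ry / R) • (y - cS)) ry ⊆
          Metric.thickening ε (Metric.ball (z + (rz / R) • (z - cS)) rz) := by
  -- `z` lies on the sphere of radius `R`, so `‖z - cS‖ = R`.
  obtain ⟨t, ht, hTeq⟩ := hT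
  have hzmem : z ∈ frontier (Metric.ball cS R) ∩ Ω := by
    rw [hTeq] at hz
    exact connectedComponentIn_subset _ _ hz
  have hzsph : ‖z - cS‖ = R := by
    have := hzmem.1
    rw [frontier_ball cS hR.ne'] at this
    simpa [mem_sphere_iff_norm] using this
  -- A uniform bound `M` for all admissible radii.
  obtain ⟨C, hC⟩ := hΩbdd.subset_closedBall 0
  set M : ℝ := max 1 (4 * C) with hMdef
  have hM1 : (1 : ℝ) ≤ M := le_max_left _ _
  have hM0 : (0 : ℝ) < M := lt_of_lt_of_le one_pos hM1
  have hMbound : ∀ (y : ℝ × ℝ) (r : ℝ), 0 < r →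
      Metric.ball (y + (r / R) • (y - cS)) r ⊆ Ω → r ≤ M := by
    intro y r hr hsub
    set c := y + (r / R) • (y - cS)
    have hc : c ∈ Metric.closedBall (0 : ℝ × ℝ) C :=
      hC (hsub (mem_ball_self hr))
    have hc2 : c + (r / 2, 0) ∈ Metric.closedBall (0 : ℝ × ℝ) C := by
      refine hC (hsub ?_)
      have : dist (c + (r / 2, 0)) c = r / 2 := by
        rw [dist_eq_norm]
        simp only [add_sub_cancel_left, Prod.norm_def, norm_zero, Real.norm_eq_abs, abs_div,
          Nat.abs_ofNat, abs_of_pos hr]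
        exact max_eq_left (by positivity)
      rw [mem_ball, this]
      linarith
    have h1 : ‖c‖ ≤ C := by simpa [Metric.mem_closedBall] using hc
    have h2 : ‖c + (r / 2, 0)‖ ≤ C := by simpa [Metric.mem_closedBall] using hc2
    have h3 : ‖((r / 2, 0) : ℝ × ℝ)‖ = r / 2 := by
      simp only [Prod.norm_def, norm_zero, Real.norm_eq_abs, abs_div, Nat.abs_ofNat,
        abs_of_pos hr]
      exact max_eq_left (by positivity)
    have h4 : r / 2 ≤ 2 * C := by
      have := norm_sub_le (c + (r / 2, 0)) c
      simp only [add_sub_cancel_left] at this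
      rw [h3] at this
      linarith
    calc r ≤ 4 * C := by linarith
      _ ≤ M := le_max_right _ _
  -- Upper semicontinuity of the maximal radius: nearby admissible radii
  -- cannot exceed `rz + ε/4`.
  have key : ∃ δ₀ > 0, ∀ (y : ℝ × ℝ) (r : ℝ), ‖y - z‖ < δ₀ → 0 < r →
      Metric.ball (y + (r / R) • (y - cS)) r ⊆ Ω → r ≤ rz + ε / 4 := by
    by_contra hcon
    push_neg at hcon
    have hstep : ∀ n : ℕ, ∃ (y : ℝ × ℝ) (r : ℝ), ‖y - z‖ < 1 / (n + 1) ∧ 0 < r ∧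
        Metric.ball (y + (r / R) • (y - cS)) r ⊆ Ω ∧ rz + ε / 4 < r := by
      intro n
      obtain ⟨y, r, h1, h2, h3, h4⟩ := hcon (1 / (n + 1)) (by positivity)
      exact ⟨y, r, h1, h2, h3, h4⟩
    choose Y Rr h1 h2 h3 h4 using hstep
    have hmem : ∀ n, Rr n ∈ Set.Icc (rz + ε / 4) M :=
      fun n => ⟨(h4 n).le, hMbound (Y n) (Rr n) (h2 n) (h3 n)⟩
    obtain ⟨L, hL, φ, hφ, hconv⟩ := (isCompact_Icc).tendsto_subseq hmem
    -- `Y ∘ φ → z`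
    have hY : Filter.Tendsto (fun n => Y (φ n)) Filter.atTop (nhds z) := by
      rw [tendsto_iff_norm_sub_tendsto_zero]
      refine squeeze_zero (fun n => norm_nonneg _) (fun n => ?_)
        tendsto_one_div_add_atTop_nhds_zero_nat
      have hle : (1 : ℝ) / (φ n + 1) ≤ 1 / (n + 1) := by
        apply one_div_le_one_div_of_le (by positivity)
        have hφn : n ≤ φ n := hφ.le_apply
        have : (n : ℝ) ≤ (φ n : ℝ) := Nat.cast_le.mpr hφn
        linarith
      exact le_trans (h1 (φ n)).le hle
    -- centers converge to the center of `K_L(z)`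
    have hRc : Filter.Tendsto (fun n => Rr (φ n) / R) Filter.atTop (nhds (L / R)) :=
      hconv.div_const R
    have hcenter : Filter.Tendsto
        (fun n => Y (φ n) + (Rr (φ n) / R) • (Y (φ n) - cS)) Filter.atTop
        (nhds (z + (L / R) • (z - cS))) :=
      hY.add (hRc.smul (hY.sub tendsto_const_nhds))
    have hL0 : 0 < L := lt_of_lt_of_le (by linarith) hL.1
    -- the limiting square is contained in `Ω`
    have hsub : Metric.ball (z + (L / R) • (z - cS)) L ⊆ Ω := by
      intro u hu
      rw [mem_ball] at hu
      have hdist : Filter.Tendsto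
          (fun n => dist u (Y (φ n) + (Rr (φ n) / R) • (Y (φ n) - cS)))
          Filter.atTop (nhds (dist u (z + (L / R) • (z - cS)))) :=
        (Continuous.dist continuous_const continuous_id).continuousAt.tendsto.comp hcenter
      have hev : ∀ᶠ n in Filter.atTop,
          dist u (Y (φ n) + (Rr (φ n) / R) • (Y (φ n) - cS)) < Rr (φ n) :=
        hdist.eventually_lt hconv hu
      obtain ⟨n, hn⟩ := hev.exists
      exact h3 (φ n) (by rw [mem_ball]; exact hn)
    have := hKzmax L hL0 hsub
    linarith [hL.1]
  obtain ⟨δ₀, hδ₀, hkey⟩ := key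
  -- choose `δ`
  refine ⟨min δ₀ (ε / (2 * (1 + M / R))), lt_min hδ₀ (by positivity), ?_⟩
  intro y hy hyz ry hry hKy hKymax
  have hyz₀ : ‖y - z‖ < δ₀ := lt_of_lt_of_le hyz (min_le_left _ _)
  have hyzε : ‖y - z‖ < ε / (2 * (1 + M / R)) := lt_of_lt_of_le hyz (min_le_right _ _)
  have hryM : ry ≤ M := hMbound y ry hry hKy
  have hryle : ry ≤ rz + ε / 4 := hkey y ry hyz₀ hry hKy
  -- rewrite the thickening of a ball as a ball
  rw [thickening_ball hε hrz]
  apply ball_subset_ball'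
  -- estimate the distance between the centers
  have hveq : (y + (ry / R) • (y - cS)) - (z + (rz / R) • (z - cS))
      = (1 + ry / R) • (y - z) + ((ry - rz) / R) • (z - cS) := by
    module
  have hnorm : dist (y + (ry / R) • (y - cS)) (z + (rz / R) • (z - cS))
      ≤ (1 + ry / R) * ‖y - z‖ + |ry - rz| := by
    rw [dist_eq_norm, hveq]
    calc ‖(1 + ry / R) • (y - z) + ((ry - rz) / R) • (z - cS)‖
        ≤ ‖(1 + ry / R) • (y - z)‖ + ‖((ry - rz) / R) • (z - cS)‖ := norm_add_le _ _
      _ = |1 + ry / R| * ‖y - z‖ + (|ry - rz| / R) * R := by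
          rw [norm_smul, norm_smul, hzsph, Real.norm_eq_abs, Real.norm_eq_abs, abs_div,
            abs_of_pos hR]
      _ = (1 + ry / R) * ‖y - z‖ + |ry - rz| := by
          rw [abs_of_pos (by positivity)]
          field_simp
  have hfac : (1 + ry / R) * ‖y - z‖ ≤ ε / 2 := by
    have h1 : (1 + ry / R) ≤ 1 + M / R := by gcongr
    have h2 : (0 : ℝ) < 1 + M / R := by positivity
    have h3 : (1 + ry / R) * ‖y - z‖ ≤ (1 + M / R) * ‖y - z‖ :=
      mul_le_mul_of_nonneg_right h1 (norm_nonneg _)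
    have h4 : (1 + M / R) * ‖y - z‖ ≤ (1 + M / R) * (ε / (2 * (1 + M / R))) :=
      mul_le_mul_of_nonneg_left hyzε.le (by positivity)
    have h5 : (1 + M / R) * (ε / (2 * (1 + M / R))) = ε / 2 := by
      field_simp
    linarith
  have habs : |ry - rz| + ry ≤ rz + ε / 2 := by
    rcases le_total ry rz with h | h
    · rw [abs_of_nonpos (by linarith)]
      linarith
    · rw [abs_of_nonneg (by linarith)]
      linarith
  linarith
end

section
/- Let Ω ⊂ ℝ² be a domain, let K be a square, and let x, y ∈ Ω ∖ K̄. Suppose there exists a polygonal path γ joining x to y in Ω such that γ ∩ K = ∅. Then there exists a polygonal path γ̃ joining x to y in Ω such that γ̃ ∩ K̄ = ∅. -/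
open Set Metric

lemma segment_joinedIn {a b : ℝ × ℝ} {s : Set (ℝ × ℝ)} (h : segment ℝ a b ⊆ s) :
    JoinedIn s a b := by
  have h1 : JoinedIn (segment ℝ a b) a b :=
    ((convex_segment a b).isPathConnected ⟨a, left_mem_segment ℝ a b⟩).joinedIn a
      (left_mem_segment ℝ a b) b (right_mem_segment ℝ a b)
  exact h1.mono h

lemma polyPath_joinedIn {γ : Set (ℝ × ℝ)} {x y : ℝ × ℝ} (h : IsPolyPath γ x y) :
    JoinedIn γ x y := by
  obtain ⟨n, p, h0, hl, rfl⟩ := h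
  have key : ∀ i : Fin (n + 2),
      JoinedIn (⋃ i : Fin (n + 1), segment ℝ (p i.castSucc) (p i.succ)) (p 0) (p i) := by
    intro i
    induction i using Fin.induction with
    | zero =>
        refine JoinedIn.refl ?_
        refine mem_iUnion.2 ⟨0, ?_⟩
        simpa using left_mem_segment ℝ (p (Fin.castSucc 0)) (p (Fin.succ 0))
    | succ j ih =>
        exact ih.trans (segment_joinedIn (subset_iUnion
          (fun i : Fin (n + 1) => segment ℝ (p i.castSucc) (p i.succ)) j))
  rw [← h0, ← hl]
  exact key (Fin.last (n + 1))

lemma isCompact_polyPath {γ : Set (ℝ × ℝ)} {x y : ℝ × ℝ} (h : IsPolyPath γ x y) :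
    IsCompact γ := by
  obtain ⟨n, p, -, -, rfl⟩ := h
  refine isCompact_iUnion fun i => ?_
  rw [← convexHull_pair]
  exact (Set.toFinite _).isCompact_convexHull ℝ

lemma isPolyPath_snoc {γ : Set (ℝ × ℝ)} {x b z : ℝ × ℝ} (h : IsPolyPath γ x b) :
    IsPolyPath (γ ∪ segment ℝ b z) x z := by
  obtain ⟨n, p, h0, hl, rfl⟩ := h
  refine ⟨n + 1, Fin.snoc p z, ?_, ?_, ?_⟩
  · rw [show (0 : Fin (n + 3)) = Fin.castSucc 0 by rfl, Fin.snoc_castSucc]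
    exact h0
  · simp
  · ext a
    simp only [mem_union, mem_iUnion]
    constructor
    · rintro (⟨j, hj⟩ | hseg)
      · refine ⟨j.castSucc, ?_⟩
        rwa [Fin.snoc_castSucc, Fin.succ_castSucc,
          Fin.snoc_castSucc]
      · refine ⟨Fin.last (n + 1), ?_⟩
        rw [Fin.succ_last, Fin.snoc_last]
        rw [show (Fin.last (n + 1)).castSucc = Fin.castSucc (Fin.last (n + 1)) from rfl,
          Fin.snoc_castSucc, hl]
        exact hseg
    · rintro ⟨i, hi⟩
      induction i using Fin.lastCases with
      | last =>
          right
          rw [Fin.succ_last, Fin.snoc_last,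
            show (Fin.last (n + 1)).castSucc = Fin.castSucc (Fin.last (n + 1)) from rfl,
            Fin.snoc_castSucc, hl] at hi
          exact hi
      | cast j =>
          left
          refine ⟨j, ?_⟩
          rwa [Fin.snoc_castSucc, Fin.succ_castSucc,
            Fin.snoc_castSucc] at hi

lemma chain_polyPath {U : Set (ℝ × ℝ)} {x y : ℝ × ℝ} (hx : x ∈ U)
    (h : Relation.ReflTransGen (fun a b => segment ℝ a b ⊆ U) x y) :
    ∃ γ, IsPolyPath γ x y ∧ γ ⊆ U := by
  induction h with
  | refl =>
      refine ⟨segment ℝ x x, ⟨0, fun _ => x, rfl, rfl, ?_⟩, ?_⟩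
      · simp
      · rw [segment_same]
        simpa using hx
  | tail hab hbc ih =>
      obtain ⟨γ, hp, hsub⟩ := ih
      exact ⟨γ ∪ segment ℝ _ _, isPolyPath_snoc hp, union_subset hsub hbc⟩

lemma joinedIn_open_chain {U : Set (ℝ × ℝ)} (hU : IsOpen U) {x y : ℝ × ℝ}
    (h : JoinedIn U x y) :
    Relation.ReflTransGen (fun a b => segment ℝ a b ⊆ U) x y := by
  set R := Relation.ReflTransGen (fun a b : ℝ × ℝ => segment ℝ a b ⊆ U) with hR
  obtain ⟨p, hp⟩ := h
  set W : Set (ℝ × ℝ) := {z | z ∈ U ∧ R x z} with hWdef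
  set W' : Set (ℝ × ℝ) := {z | z ∈ U ∧ ¬ R x z} with hW'def
  have hW : IsOpen W := by
    rw [Metric.isOpen_iff]
    rintro z ⟨hzU, hzR⟩
    obtain ⟨ε, hε, hball⟩ := Metric.isOpen_iff.1 hU z hzU
    refine ⟨ε, hε, fun w hw => ⟨hball hw, hzR.tail ?_⟩⟩
    exact ((convex_ball z ε).segment_subset (mem_ball_self hε) hw).trans hball
  have hW' : IsOpen W' := by
    rw [Metric.isOpen_iff]
    rintro z ⟨hzU, hzR⟩
    obtain ⟨ε, hε, hball⟩ := Metric.isOpen_iff.1 hU z hzU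
    refine ⟨ε, hε, fun w hw => ⟨hball hw, fun hwR => hzR (hwR.tail ?_)⟩⟩
    exact ((convex_ball z ε).segment_subset hw (mem_ball_self hε)).trans hball
  by_contra hy
  have hyW' : y ∈ W' := ⟨by simpa using hp 1, hy⟩
  have hcon := (isConnected_range p.continuous_toFun).isPreconnected W W' hW hW'
    (fun z ⟨t, ht⟩ => by
      rcases Classical.em (R x z) with h' | h'
      · exact Or.inl ⟨ht ▸ hp t, h'⟩
      · exact Or.inr ⟨ht ▸ hp t, h'⟩)
    ⟨x, ⟨0, by simp⟩, by simpa using hp 0, Relation.ReflTransGen.refl⟩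
    ⟨y, ⟨1, by simp⟩, hyW'⟩
  obtain ⟨z, -, ⟨-, hz1⟩, -, hz2⟩ := hcon
  exact hz2 hz1

/-- If two points of a domain `Ω` outside the closed square `K̄`
can be joined in `Ω` by a polygonal path avoiding the open square `K`, then they
can be joined in `Ω` by a polygonal path avoiding the closed square `K̄`. -/
theorem poly_path_avoiding_closed_square
    (Ω : Set (ℝ × ℝ)) (hΩo : IsOpen Ω) (hΩconn : IsConnected Ω)
    (c : ℝ × ℝ) (r : ℝ) (hr : 0 < r)
    (x y : ℝ × ℝ)
    (hx : x ∈ Ω \ closure (Metric.ball c r)) (hy : y ∈ Ω \ closure (Metric.ball c r))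
    (hγ : ∃ γ : Set (ℝ × ℝ), IsPolyPath γ x y ∧ γ ⊆ Ω ∧ γ ∩ Metric.ball c r = ∅) :
    ∃ γ' : Set (ℝ × ℝ), IsPolyPath γ' x y ∧ γ' ⊆ Ω ∧
      γ' ∩ closure (Metric.ball c r) = ∅ := by
  rw [closure_ball c hr.ne'] at hx hy ⊢
  obtain ⟨γ, hpoly, hγΩ, hγK⟩ := hγ
  obtain ⟨hxΩ, hxK⟩ := hx
  obtain ⟨hyΩ, hyK⟩ := hy
  have hxc : r < ‖x - c‖ := by
    rw [← dist_eq_norm]; simpa [mem_closedBall, not_le] using hxK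
  have hyc : r < ‖y - c‖ := by
    rw [← dist_eq_norm]; simpa [mem_closedBall, not_le] using hyK
  have hγr : ∀ z ∈ γ, r ≤ ‖z - c‖ := by
    intro z hz
    by_contra hlt
    push_neg at hlt
    have : z ∈ γ ∩ Metric.ball c r := ⟨hz, by rwa [mem_ball, dist_eq_norm]⟩
    simp [hγK] at this
  obtain ⟨δ, hδ, hthick⟩ :=
    (isCompact_polyPath hpoly).exists_thickening_subset_open hΩo hγΩ
  set s : ℝ := min (r + δ / 2) (min ‖x - c‖ ‖y - c‖) with hs
  have hrs : r < s := lt_min (by linarith) (lt_min hxc hyc)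
  have hsx : s ≤ ‖x - c‖ := (min_le_right _ _).trans (min_le_left _ _)
  have hsy : s ≤ ‖y - c‖ := (min_le_right _ _).trans (min_le_right _ _)
  have hsδ : s - r < δ := by
    have : s ≤ r + δ / 2 := min_le_left _ _
    linarith
  set f : ℝ × ℝ → ℝ × ℝ := fun z => c + (max ‖z - c‖ s / ‖z - c‖) • (z - c) with hf
  -- basic computations
  have hnorm : ∀ z : ℝ × ℝ, r ≤ ‖z - c‖ → ‖f z - c‖ = max ‖z - c‖ s := by
    intro z hz
    have ht : (0:ℝ) < ‖z - c‖ := lt_of_lt_of_le hr hz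
    have : f z - c = (max ‖z - c‖ s / ‖z - c‖) • (z - c) := by
      simp [hf, add_sub_cancel_left]
    rw [this, norm_smul, Real.norm_eq_abs,
      abs_of_nonneg (div_nonneg (le_trans (norm_nonneg _) (le_max_left _ _)) ht.le)]
    field_simp
  have hdist : ∀ z : ℝ × ℝ, r ≤ ‖z - c‖ → ‖f z - z‖ = max ‖z - c‖ s - ‖z - c‖ := by
    intro z hz
    have ht : (0:ℝ) < ‖z - c‖ := lt_of_lt_of_le hr hz
    have h1 : f z - z = ((max ‖z - c‖ s - ‖z - c‖) / ‖z - c‖) • (z - c) := by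
      rw [hf]
      have : c + (max ‖z - c‖ s / ‖z - c‖) • (z - c) - z
          = (max ‖z - c‖ s / ‖z - c‖) • (z - c) - (z - c) := by abel
      rw [this, sub_div, div_self ht.ne', sub_smul, one_smul]
    rw [h1, norm_smul, Real.norm_eq_abs,
      abs_of_nonneg (div_nonneg (by simp [le_max_left]) ht.le)]
    field_simp
  have hfix : ∀ z : ℝ × ℝ, s ≤ ‖z - c‖ → f z = z := by
    intro z hz
    have ht : ‖z - c‖ ≠ 0 := (lt_of_lt_of_le (hr.trans hrs) hz).ne'
    rw [hf]
    simp only [max_eq_left hz, div_self ht, one_smul]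
    abel
  set U : Set (ℝ × ℝ) := Ω \ closedBall c r with hU
  have hUopen : IsOpen U := hΩo.sdiff isClosed_closedBall
  have hfmem : ∀ z ∈ γ, f z ∈ U := by
    intro z hz
    have hz' := hγr z hz
    constructor
    · apply hthick
      rw [mem_thickening_iff]
      refine ⟨z, hz, ?_⟩
      rw [dist_eq_norm, hdist z hz']
      have : max ‖z - c‖ s ≤ ‖z - c‖ + (s - r) :=
        max_le (by linarith) (by linarith)
      linarith
    · rw [mem_closedBall, dist_eq_norm, not_le, hnorm z hz']
      exact hrs.trans_le (le_max_right _ _)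
  -- continuity of f away from c
  have hcont : ContinuousOn f {z : ℝ × ℝ | z ≠ c} := by
    apply continuousOn_const.add
    apply ContinuousOn.fun_smul
    · apply ContinuousOn.div
      · exact (((continuous_id.sub continuous_const).norm).max continuous_const).continuousOn
      · exact ((continuous_id.sub continuous_const).norm).continuousOn
      · intro z hz
        simpa [sub_eq_zero] using hz
    · exact (continuous_id.sub continuous_const).continuousOn
  -- build a path in U
  have hjoin : JoinedIn γ x y := polyPath_joinedIn hpoly
  obtain ⟨p, hp⟩ := hjoin
  have hpne : ∀ t, p t ≠ c := by
    intro t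
    have := hγr _ (hp t)
    intro h
    rw [h] at this
    simp at this
    linarith
  have hpc : Continuous fun t => f (p t) :=
    hcont.comp_continuous p.continuous_toFun hpne
  have hfx : f x = x := hfix x hsx
  have hfy : f y = y := hfix y hsy
  have hjoinU : JoinedIn U x y := by
    refine ⟨⟨⟨fun t => f (p t), hpc⟩, ?_, ?_⟩, fun t => hfmem _ (hp t)⟩
    · simp [hfx]
    · simp [hfy]
  have hchain := joinedIn_open_chain hUopen hjoinU
  obtain ⟨γ', hpp, hsub⟩ := chain_polyPath hjoinU.source_mem hchain
  refine ⟨γ', hpp, hsub.trans diff_subset, ?_⟩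
  ext a
  simp only [mem_inter_iff, mem_empty_iff_false, iff_false, not_and]
  intro ha
  exact (hsub ha).2
end

section
/- Let Ω ⊂ ℝ² be a domain satisfying the arc diameter condition with some constant η ≥ 1. Let S₁, S₂ ⊂ Ω be disjoint squares such that S̄₁ ∩ S̄₂ ∩ Ω = ∅. Then S̄₁ ∩ S̄₂ contains at most one point. -/
open Set Metric

/-- `Ω` satisfies the arc diameter condition with constant `η`: any two points of
`Ω` are joined by a path in `Ω` of diameter at most `η` times their distance. -/
def ArcDiamCond (Ω : Set (ℝ × ℝ)) (η : ℝ) : Prop :=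
  ∀ a ∈ Ω, ∀ b ∈ Ω, ∃ γ : Path a b, Set.range ⇑γ ⊆ Ω ∧
    Metric.diam (Set.range ⇑γ) ≤ η * dist a b

private lemma mid_abs_lt {u v c r : ℝ} (huv : u ≠ v) (hu : |u - c| ≤ r) (hv : |v - c| ≤ r) :
    |(u + v) / 2 - c| < r := by
  rcases abs_le.1 hu with ⟨hu1, hu2⟩
  rcases abs_le.1 hv with ⟨hv1, hv2⟩
  rw [abs_lt]
  constructor
  · by_contra hc
    push_neg at hc
    have h1 : u - c = -r := by linarith
    have h2 : v - c = -r := by linarith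
    exact huv (by linarith)
  · by_contra hc
    push_neg at hc
    have h1 : u - c = r := by linarith
    have h2 : v - c = r := by linarith
    exact huv (by linarith)

/-- Core contradiction, vertical shared segment, `c₁` on the left. -/
private lemma coreV (Ω : Set (ℝ × ℝ)) (η : ℝ) (hη : 1 ≤ η) (hADC : ArcDiamCond Ω η)
    (c₁ c₂ : ℝ × ℝ) (r₁ r₂ : ℝ) (hr₁ : 0 < r₁) (hr₂ : 0 < r₂)
    (hS₁ : Metric.ball c₁ r₁ ⊆ Ω) (hS₂ : Metric.ball c₂ r₂ ⊆ Ω)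
    (hmeet : closure (Metric.ball c₁ r₁) ∩ closure (Metric.ball c₂ r₂) ∩ Ω = ∅)
    (x y₁ y₂ : ℝ) (hy : y₁ < y₂)
    (hx1 : x = c₁.1 + r₁) (hx2 : x = c₂.1 - r₂)
    (h1l : c₁.2 - r₁ ≤ y₁) (h1u : y₂ ≤ c₁.2 + r₁)
    (h2l : c₂.2 - r₂ ≤ y₁) (h2u : y₂ ≤ c₂.2 + r₂) : False := by
  have hη0 : (0:ℝ) < η := lt_of_lt_of_le one_pos hη
  set m : ℝ := (y₁ + y₂) / 2 with hm
  set L : ℝ := (y₂ - y₁) / 2 with hL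
  have hL0 : 0 < L := by simp [hL]; linarith
  set ε : ℝ := min (L / (2 * η)) (min r₁ r₂) with hε
  have hε0 : 0 < ε := by
    apply lt_min (by positivity) (lt_min hr₁ hr₂)
  have hεr₁ : ε ≤ r₁ := le_trans (min_le_right _ _) (min_le_left _ _)
  have hεr₂ : ε ≤ r₂ := le_trans (min_le_right _ _) (min_le_right _ _)
  have hεL : 2 * η * ε ≤ L := by
    have h := min_le_left (L / (2 * η)) (min r₁ r₂)
    rw [le_div_iff₀ (by positivity)] at h
    · linarith [h]
  have hm1 : |m - c₁.2| < r₁ := abs_lt.2 ⟨by simp [hm]; linarith, by simp [hm]; linarith⟩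
  have hm2 : |m - c₂.2| < r₂ := abs_lt.2 ⟨by simp [hm]; linarith, by simp [hm]; linarith⟩
  set a : ℝ × ℝ := (x - ε, m) with hadef
  set b : ℝ × ℝ := (x + ε, m) with hbdef
  have ha : a ∈ Metric.ball c₁ r₁ := by
    rw [mem_ball, Prod.dist_eq]
    apply max_lt
    · rw [Real.dist_eq]
      have : a.1 - c₁.1 = r₁ - ε := by simp [hadef]; linarith
      rw [this]
      rw [abs_lt]; constructor <;> linarith
    · rw [Real.dist_eq]; exact hm1
  have hb : b ∈ Metric.ball c₂ r₂ := by
    rw [mem_ball, Prod.dist_eq]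
    apply max_lt
    · rw [Real.dist_eq]
      have : b.1 - c₂.1 = -(r₂ - ε) := by simp [hbdef]; linarith
      rw [this, abs_neg, abs_lt]; constructor <;> linarith
    · rw [Real.dist_eq]; exact hm2
  obtain ⟨γ, hγΩ, hγd⟩ := hADC a (hS₁ ha) b (hS₂ hb)
  have hdab : dist a b = 2 * ε := by
    rw [Prod.dist_eq]
    have h1 : dist a.1 b.1 = 2 * ε := by
      rw [Real.dist_eq]
      have : a.1 - b.1 = -(2 * ε) := by simp [hadef, hbdef]; ring
      rw [this, abs_neg, abs_of_pos (by linarith)]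
    have h2 : dist a.2 b.2 = 0 := by simp [hadef, hbdef]
    rw [h1, h2]
    exact max_eq_left (by linarith)
  have hdiam : Metric.diam (Set.range ⇑γ) ≤ 2 * η * ε := by
    calc Metric.diam (Set.range ⇑γ) ≤ η * dist a b := hγd
    _ = 2 * η * ε := by rw [hdab]; ring
  -- intermediate value: find a point of the path with first coordinate x
  have hf : Continuous fun t : unitInterval => (γ t).1 := continuous_fst.comp γ.continuous
  have hx_mem : x ∈ Icc ((γ 0).1) ((γ 1).1) := by
    rw [γ.source, γ.target]
    constructor
    · simp [hadef]; linarith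
    · simp [hbdef]; linarith
  obtain ⟨t, ht⟩ := intermediate_value_univ 0 1 hf hx_mem
  set z : ℝ × ℝ := γ t with hzdef
  have hzΩ : z ∈ Ω := hγΩ ⟨t, rfl⟩
  have hbd := (isCompact_range γ.continuous).isBounded
  have hza : dist z a ≤ 2 * η * ε := by
    refine le_trans (dist_le_diam_of_mem hbd ⟨t, rfl⟩ ?_) hdiam
    exact ⟨0, γ.source⟩
  have hz2 : |z.2 - m| ≤ L := by
    have h1 : dist z.2 a.2 ≤ dist z a := by
      rw [Prod.dist_eq]; exact le_max_right _ _
    rw [Real.dist_eq] at h1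
    have : a.2 = m := rfl
    rw [this] at h1
    linarith
  have hz2' : y₁ ≤ z.2 ∧ z.2 ≤ y₂ := by
    rcases abs_le.1 hz2 with ⟨ha1, ha2⟩
    constructor <;> [skip; skip] <;> simp [hm, hL] at ha1 ha2 ⊢ <;> linarith
  have hzc₁ : z ∈ closedBall c₁ r₁ := by
    rw [mem_closedBall, Prod.dist_eq]
    apply max_le
    · rw [Real.dist_eq, show z.1 = x from ht, hx1]
      simp [abs_of_nonneg hr₁.le]
    · rw [Real.dist_eq, abs_le]
      constructor <;> linarith [hz2'.1, hz2'.2]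
  have hzc₂ : z ∈ closedBall c₂ r₂ := by
    rw [mem_closedBall, Prod.dist_eq]
    apply max_le
    · rw [Real.dist_eq, show z.1 = x from ht, hx2]
      have : c₂.1 - r₂ - c₂.1 = -r₂ := by ring
      rw [this, abs_neg, abs_of_nonneg hr₂.le]
    · rw [Real.dist_eq, abs_le]
      constructor <;> linarith [hz2'.1, hz2'.2]
  have : z ∈ (∅ : Set (ℝ × ℝ)) := by
    rw [← hmeet, closure_ball c₁ hr₁.ne', closure_ball c₂ hr₂.ne']
    exact ⟨⟨hzc₁, hzc₂⟩, hzΩ⟩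
  exact this

/-- Positioning lemma, vertical shared segment. -/
private lemma posV (c₁ c₂ : ℝ × ℝ) (r₁ r₂ : ℝ) (hr₁ : 0 < r₁) (hr₂ : 0 < r₂)
    (hdisj : Metric.ball c₁ r₁ ∩ Metric.ball c₂ r₂ = ∅)
    (x y₁ y₂ : ℝ) (hy : y₁ < y₂)
    (hx1 : |x - c₁.1| ≤ r₁) (hx2 : |x - c₂.1| ≤ r₂)
    (h1l : c₁.2 - r₁ ≤ y₁) (h1u : y₂ ≤ c₁.2 + r₁)
    (h2l : c₂.2 - r₂ ≤ y₁) (h2u : y₂ ≤ c₂.2 + r₂) :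
    (x = c₁.1 + r₁ ∧ x = c₂.1 - r₂) ∨ (x = c₂.1 + r₂ ∧ x = c₁.1 - r₁) := by
  set m : ℝ := (y₁ + y₂) / 2 with hm
  have hm1 : |m - c₁.2| < r₁ := abs_lt.2 ⟨by simp [hm]; linarith, by simp [hm]; linarith⟩
  have hm2 : |m - c₂.2| < r₂ := abs_lt.2 ⟨by simp [hm]; linarith, by simp [hm]; linarith⟩
  have H : ∀ u : ℝ, |u - c₁.1| < r₁ → |u - c₂.1| < r₂ → False := by
    intro u h1 h2
    have hu : (u, m) ∈ Metric.ball c₁ r₁ ∩ Metric.ball c₂ r₂ := by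
      constructor <;> rw [mem_ball, Prod.dist_eq] <;> apply max_lt <;>
        rw [Real.dist_eq] <;> assumption
    rw [hdisj] at hu
    exact hu
  have hsep : c₁.1 + r₁ ≤ c₂.1 - r₂ ∨ c₂.1 + r₂ ≤ c₁.1 - r₁ := by
    by_contra hc
    push_neg at hc
    obtain ⟨h5, h6⟩ := hc
    set A : ℝ := max (c₁.1 - r₁) (c₂.1 - r₂) with hA
    set B : ℝ := min (c₁.1 + r₁) (c₂.1 + r₂) with hB
    have hAB : A < B :=
      max_lt (lt_min (by linarith) (by linarith)) (lt_min (by linarith) (by linarith))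
    set u : ℝ := (A + B) / 2 with hu
    have hA1 : c₁.1 - r₁ ≤ A := le_max_left _ _
    have hA2 : c₂.1 - r₂ ≤ A := le_max_right _ _
    have hB1 : B ≤ c₁.1 + r₁ := min_le_left _ _
    have hB2 : B ≤ c₂.1 + r₂ := min_le_right _ _
    exact H u (abs_lt.2 ⟨by linarith, by linarith⟩) (abs_lt.2 ⟨by linarith, by linarith⟩)
  rcases abs_le.1 hx1 with ⟨ha1, ha2⟩
  rcases abs_le.1 hx2 with ⟨hb1, hb2⟩
  rcases hsep with h | h
  · left
    exact ⟨by linarith, by linarith⟩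
  · right
    exact ⟨by linarith, by linarith⟩

/-- Core contradiction, horizontal shared segment, `c₁` below. -/
private lemma coreH (Ω : Set (ℝ × ℝ)) (η : ℝ) (hη : 1 ≤ η) (hADC : ArcDiamCond Ω η)
    (c₁ c₂ : ℝ × ℝ) (r₁ r₂ : ℝ) (hr₁ : 0 < r₁) (hr₂ : 0 < r₂)
    (hS₁ : Metric.ball c₁ r₁ ⊆ Ω) (hS₂ : Metric.ball c₂ r₂ ⊆ Ω)
    (hmeet : closure (Metric.ball c₁ r₁) ∩ closure (Metric.ball c₂ r₂) ∩ Ω = ∅)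
    (x y₁ y₂ : ℝ) (hy : y₁ < y₂)
    (hx1 : x = c₁.2 + r₁) (hx2 : x = c₂.2 - r₂)
    (h1l : c₁.1 - r₁ ≤ y₁) (h1u : y₂ ≤ c₁.1 + r₁)
    (h2l : c₂.1 - r₂ ≤ y₁) (h2u : y₂ ≤ c₂.1 + r₂) : False := by
  have hη0 : (0:ℝ) < η := lt_of_lt_of_le one_pos hη
  set m : ℝ := (y₁ + y₂) / 2 with hm
  set L : ℝ := (y₂ - y₁) / 2 with hL
  have hL0 : 0 < L := by simp [hL]; linarith
  set ε : ℝ := min (L / (2 * η)) (min r₁ r₂) with hε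
  have hε0 : 0 < ε := by
    apply lt_min (by positivity) (lt_min hr₁ hr₂)
  have hεr₁ : ε ≤ r₁ := le_trans (min_le_right _ _) (min_le_left _ _)
  have hεr₂ : ε ≤ r₂ := le_trans (min_le_right _ _) (min_le_right _ _)
  have hεL : 2 * η * ε ≤ L := by
    have h := min_le_left (L / (2 * η)) (min r₁ r₂)
    rw [le_div_iff₀ (by positivity)] at h
    · linarith [h]
  have hm1 : |m - c₁.1| < r₁ := abs_lt.2 ⟨by simp [hm]; linarith, by simp [hm]; linarith⟩
  have hm2 : |m - c₂.1| < r₂ := abs_lt.2 ⟨by simp [hm]; linarith, by simp [hm]; linarith⟩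
  set a : ℝ × ℝ := (m, x - ε) with hadef
  set b : ℝ × ℝ := (m, x + ε) with hbdef
  have ha : a ∈ Metric.ball c₁ r₁ := by
    rw [mem_ball, Prod.dist_eq]
    apply max_lt
    · rw [Real.dist_eq]; exact hm1
    · rw [Real.dist_eq]
      have : a.2 - c₁.2 = r₁ - ε := by simp [hadef]; linarith
      rw [this]
      rw [abs_lt]; constructor <;> linarith
  have hb : b ∈ Metric.ball c₂ r₂ := by
    rw [mem_ball, Prod.dist_eq]
    apply max_lt
    · rw [Real.dist_eq]; exact hm2
    · rw [Real.dist_eq]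
      have : b.2 - c₂.2 = -(r₂ - ε) := by simp [hbdef]; linarith
      rw [this, abs_neg, abs_lt]; constructor <;> linarith
  obtain ⟨γ, hγΩ, hγd⟩ := hADC a (hS₁ ha) b (hS₂ hb)
  have hdab : dist a b = 2 * ε := by
    rw [Prod.dist_eq]
    have h1 : dist a.2 b.2 = 2 * ε := by
      rw [Real.dist_eq]
      have : a.2 - b.2 = -(2 * ε) := by simp [hadef, hbdef]; ring
      rw [this, abs_neg, abs_of_pos (by linarith)]
    have h2 : dist a.1 b.1 = 0 := by simp [hadef, hbdef]
    rw [h1, h2]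
    exact max_eq_right (by linarith)
  have hdiam : Metric.diam (Set.range ⇑γ) ≤ 2 * η * ε := by
    calc Metric.diam (Set.range ⇑γ) ≤ η * dist a b := hγd
    _ = 2 * η * ε := by rw [hdab]; ring
  have hf : Continuous fun t : unitInterval => (γ t).2 := continuous_snd.comp γ.continuous
  have hx_mem : x ∈ Icc ((γ 0).2) ((γ 1).2) := by
    rw [γ.source, γ.target]
    constructor
    · simp [hadef]; linarith
    · simp [hbdef]; linarith
  obtain ⟨t, ht⟩ := intermediate_value_univ 0 1 hf hx_mem
  set z : ℝ × ℝ := γ t with hzdef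
  have hzΩ : z ∈ Ω := hγΩ ⟨t, rfl⟩
  have hbd := (isCompact_range γ.continuous).isBounded
  have hza : dist z a ≤ 2 * η * ε := by
    refine le_trans (dist_le_diam_of_mem hbd ⟨t, rfl⟩ ?_) hdiam
    exact ⟨0, γ.source⟩
  have hz2 : |z.1 - m| ≤ L := by
    have h1 : dist z.1 a.1 ≤ dist z a := by
      rw [Prod.dist_eq]; exact le_max_left _ _
    rw [Real.dist_eq] at h1
    have : a.1 = m := rfl
    rw [this] at h1
    linarith
  have hz2' : y₁ ≤ z.1 ∧ z.1 ≤ y₂ := by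
    rcases abs_le.1 hz2 with ⟨ha1, ha2⟩
    constructor <;> [skip; skip] <;> simp [hm, hL] at ha1 ha2 ⊢ <;> linarith
  have hzc₁ : z ∈ closedBall c₁ r₁ := by
    rw [mem_closedBall, Prod.dist_eq]
    apply max_le
    · rw [Real.dist_eq, abs_le]
      constructor <;> linarith [hz2'.1, hz2'.2]
    · rw [Real.dist_eq, show z.2 = x from ht, hx1]
      simp [abs_of_nonneg hr₁.le]
  have hzc₂ : z ∈ closedBall c₂ r₂ := by
    rw [mem_closedBall, Prod.dist_eq]
    apply max_le
    · rw [Real.dist_eq, abs_le]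
      constructor <;> linarith [hz2'.1, hz2'.2]
    · rw [Real.dist_eq, show z.2 = x from ht, hx2]
      have : c₂.2 - r₂ - c₂.2 = -r₂ := by ring
      rw [this, abs_neg, abs_of_nonneg hr₂.le]
  have : z ∈ (∅ : Set (ℝ × ℝ)) := by
    rw [← hmeet, closure_ball c₁ hr₁.ne', closure_ball c₂ hr₂.ne']
    exact ⟨⟨hzc₁, hzc₂⟩, hzΩ⟩
  exact this

/-- Positioning lemma, horizontal shared segment. -/
private lemma posH (c₁ c₂ : ℝ × ℝ) (r₁ r₂ : ℝ) (hr₁ : 0 < r₁) (hr₂ : 0 < r₂)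
    (hdisj : Metric.ball c₁ r₁ ∩ Metric.ball c₂ r₂ = ∅)
    (x y₁ y₂ : ℝ) (hy : y₁ < y₂)
    (hx1 : |x - c₁.2| ≤ r₁) (hx2 : |x - c₂.2| ≤ r₂)
    (h1l : c₁.1 - r₁ ≤ y₁) (h1u : y₂ ≤ c₁.1 + r₁)
    (h2l : c₂.1 - r₂ ≤ y₁) (h2u : y₂ ≤ c₂.1 + r₂) :
    (x = c₁.2 + r₁ ∧ x = c₂.2 - r₂) ∨ (x = c₂.2 + r₂ ∧ x = c₁.2 - r₁) := by
  set m : ℝ := (y₁ + y₂) / 2 with hm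
  have hm1 : |m - c₁.1| < r₁ := abs_lt.2 ⟨by simp [hm]; linarith, by simp [hm]; linarith⟩
  have hm2 : |m - c₂.1| < r₂ := abs_lt.2 ⟨by simp [hm]; linarith, by simp [hm]; linarith⟩
  have H : ∀ u : ℝ, |u - c₁.2| < r₁ → |u - c₂.2| < r₂ → False := by
    intro u h1 h2
    have hu : (m, u) ∈ Metric.ball c₁ r₁ ∩ Metric.ball c₂ r₂ := by
      constructor <;> rw [mem_ball, Prod.dist_eq] <;> apply max_lt <;>
        rw [Real.dist_eq] <;> assumption
    rw [hdisj] at hu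
    exact hu
  have hsep : c₁.2 + r₁ ≤ c₂.2 - r₂ ∨ c₂.2 + r₂ ≤ c₁.2 - r₁ := by
    by_contra hc
    push_neg at hc
    obtain ⟨h5, h6⟩ := hc
    set A : ℝ := max (c₁.2 - r₁) (c₂.2 - r₂) with hA
    set B : ℝ := min (c₁.2 + r₁) (c₂.2 + r₂) with hB
    have hAB : A < B :=
      max_lt (lt_min (by linarith) (by linarith)) (lt_min (by linarith) (by linarith))
    set u : ℝ := (A + B) / 2 with hu
    have hA1 : c₁.2 - r₁ ≤ A := le_max_left _ _
    have hA2 : c₂.2 - r₂ ≤ A := le_max_right _ _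
    have hB1 : B ≤ c₁.2 + r₁ := min_le_left _ _
    have hB2 : B ≤ c₂.2 + r₂ := min_le_right _ _
    exact H u (abs_lt.2 ⟨by linarith, by linarith⟩) (abs_lt.2 ⟨by linarith, by linarith⟩)
  rcases abs_le.1 hx1 with ⟨ha1, ha2⟩
  rcases abs_le.1 hx2 with ⟨hb1, hb2⟩
  rcases hsep with h | h
  · left
    exact ⟨by linarith, by linarith⟩
  · right
    exact ⟨by linarith, by linarith⟩

/-- `Ω ⊂ ℝ²` a domain (uniform norm; `Metric.ball` is an open
axis-parallel square) satisfying the arc diameter condition with constant `η ≥ 1`.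
If `S₁, S₂ ⊆ Ω` are disjoint squares with `S̄₁ ∩ S̄₂ ∩ Ω = ∅`, then `S̄₁ ∩ S̄₂`
contains at most one point. -/
theorem disjoint_squares_closures_meet_in_at_most_one_point
    (Ω : Set (ℝ × ℝ)) (hΩo : IsOpen Ω) (hΩconn : IsConnected Ω)
    (η : ℝ) (hη : 1 ≤ η) (hADC : ArcDiamCond Ω η)
    (c₁ c₂ : ℝ × ℝ) (r₁ r₂ : ℝ) (hr₁ : 0 < r₁) (hr₂ : 0 < r₂)
    (hS₁ : Metric.ball c₁ r₁ ⊆ Ω) (hS₂ : Metric.ball c₂ r₂ ⊆ Ω)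
    (hdisj : Metric.ball c₁ r₁ ∩ Metric.ball c₂ r₂ = ∅)
    (hmeet : closure (Metric.ball c₁ r₁) ∩ closure (Metric.ball c₂ r₂) ∩ Ω = ∅) :
    (closure (Metric.ball c₁ r₁) ∩ closure (Metric.ball c₂ r₂)).Subsingleton := by
  intro p hp q hq
  by_contra hne
  rw [closure_ball c₁ hr₁.ne', closure_ball c₂ hr₂.ne'] at hp hq
  obtain ⟨hp1, hp2⟩ := hp
  obtain ⟨hq1, hq2⟩ := hq
  -- unpack coordinatewise bounds
  have unpack : ∀ (w c : ℝ × ℝ) (r : ℝ), w ∈ closedBall c r →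
      |w.1 - c.1| ≤ r ∧ |w.2 - c.2| ≤ r := by
    intro w c r hw
    rw [mem_closedBall, Prod.dist_eq, max_le_iff, Real.dist_eq, Real.dist_eq] at hw
    exact hw
  obtain ⟨hp11, hp12⟩ := unpack p c₁ r₁ hp1
  obtain ⟨hp21, hp22⟩ := unpack p c₂ r₂ hp2
  obtain ⟨hq11, hq12⟩ := unpack q c₁ r₁ hq1
  obtain ⟨hq21, hq22⟩ := unpack q c₂ r₂ hq2
  -- the two points agree in some coordinate
  have hcase : p.1 = q.1 ∨ p.2 = q.2 := by
    by_contra h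
    push_neg at h
    obtain ⟨h1, h2⟩ := h
    have hw : ((p.1 + q.1) / 2, (p.2 + q.2) / 2) ∈
        Metric.ball c₁ r₁ ∩ Metric.ball c₂ r₂ := by
      constructor <;> rw [mem_ball, Prod.dist_eq] <;> apply max_lt <;> rw [Real.dist_eq]
      · exact mid_abs_lt h1 hp11 hq11
      · exact mid_abs_lt h2 hp12 hq12
      · exact mid_abs_lt h1 hp21 hq21
      · exact mid_abs_lt h2 hp22 hq22
    rw [hdisj] at hw
    exact hw
  have hmeet' : closure (Metric.ball c₂ r₂) ∩ closure (Metric.ball c₁ r₁) ∩ Ω = ∅ := by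
    rw [Set.inter_comm (closure (Metric.ball c₂ r₂))]
    exact hmeet
  have hdisj' : Metric.ball c₂ r₂ ∩ Metric.ball c₁ r₁ = ∅ := by
    rw [Set.inter_comm]; exact hdisj
  rcases hcase with hc | hc
  · -- vertical segment
    have hne2 : p.2 ≠ q.2 := fun h => hne (Prod.ext hc h)
    set x := p.1 with hx
    set y₁ := min p.2 q.2 with hy₁
    set y₂ := max p.2 q.2 with hy₂
    have hy : y₁ < y₂ := min_lt_max.2 hne2
    have hq1' : |x - c₁.1| ≤ r₁ := hp11
    have hq2' : |x - c₂.1| ≤ r₂ := hp21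
    have b1l : c₁.2 - r₁ ≤ y₁ := le_min (by linarith [abs_le.1 hp12]) (by linarith [abs_le.1 hq12])
    have b1u : y₂ ≤ c₁.2 + r₁ := max_le (by linarith [abs_le.1 hp12]) (by linarith [abs_le.1 hq12])
    have b2l : c₂.2 - r₂ ≤ y₁ := le_min (by linarith [abs_le.1 hp22]) (by linarith [abs_le.1 hq22])
    have b2u : y₂ ≤ c₂.2 + r₂ := max_le (by linarith [abs_le.1 hp22]) (by linarith [abs_le.1 hq22])
    rcases posV c₁ c₂ r₁ r₂ hr₁ hr₂ hdisj x y₁ y₂ hy hq1' hq2' b1l b1u b2l b2u with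
      ⟨e1, e2⟩ | ⟨e1, e2⟩
    · exact coreV Ω η hη hADC c₁ c₂ r₁ r₂ hr₁ hr₂ hS₁ hS₂ hmeet x y₁ y₂ hy e1 e2 b1l b1u b2l b2u
    · exact coreV Ω η hη hADC c₂ c₁ r₂ r₁ hr₂ hr₁ hS₂ hS₁ hmeet' x y₁ y₂ hy e1 e2 b2l b2u b1l b1u
  · -- horizontal segment
    have hne2 : p.1 ≠ q.1 := fun h => hne (Prod.ext h hc)
    set x := p.2 with hx
    set y₁ := min p.1 q.1 with hy₁
    set y₂ := max p.1 q.1 with hy₂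
    have hy : y₁ < y₂ := min_lt_max.2 hne2
    have hq1' : |x - c₁.2| ≤ r₁ := hp12
    have hq2' : |x - c₂.2| ≤ r₂ := hp22
    have b1l : c₁.1 - r₁ ≤ y₁ := le_min (by linarith [abs_le.1 hp11]) (by linarith [abs_le.1 hq11])
    have b1u : y₂ ≤ c₁.1 + r₁ := max_le (by linarith [abs_le.1 hp11]) (by linarith [abs_le.1 hq11])
    have b2l : c₂.1 - r₂ ≤ y₁ := le_min (by linarith [abs_le.1 hp21]) (by linarith [abs_le.1 hq21])
    have b2u : y₂ ≤ c₂.1 + r₂ := max_le (by linarith [abs_le.1 hp21]) (by linarith [abs_le.1 hq21])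
    rcases posH c₁ c₂ r₁ r₂ hr₁ hr₂ hdisj x y₁ y₂ hy hq1' hq2' b1l b1u b2l b2u with
      ⟨e1, e2⟩ | ⟨e1, e2⟩
    · exact coreH Ω η hη hADC c₁ c₂ r₁ r₂ hr₁ hr₂ hS₁ hS₂ hmeet x y₁ y₂ hy e1 e2 b1l b1u b2l b2u
    · exact coreH Ω η hη hADC c₂ c₁ r₂ r₁ hr₂ hr₁ hS₂ hS₁ hmeet' x y₁ y₂ hy e1 e2 b2l b2u b1l b1u
end

section
/- Let Q ⊂ ℝ² be a square and let a, b ∈ Q̄ with a ≠ b. Then there exists a polygonal path γ consisting of at most two line segments which joins a to b, such that γ ∖ {a,b} ⊂ Q and, for every α ∈ (0,1], len_{α,Q}(γ) = ∫_γ dist(u, ∂Q)^{α−1} ds(u) ≤ (3/α)·‖a−b‖^α. -/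
open Set Metric MeasureTheory

/-- The Euclidean norm of a vector of `ℝ × ℝ` (whose ambient norm is the sup norm). -/
noncomputable def euclidNorm (v : ℝ × ℝ) : ℝ := Real.sqrt (v.1 ^ 2 + v.2 ^ 2)

/-- The subhyperbolic length `∫_γ dist(u, ∂G)^(α-1) ds(u)` of the line segment
from `u` to `v`, computed with Euclidean arc length and with the uniform-norm
distance to the boundary of `G` (the ambient norm of `ℝ × ℝ` is the sup norm). -/
noncomputable def segLen (G : Set (ℝ × ℝ)) (α : ℝ) (u v : ℝ × ℝ) : ℝ :=
  ∫ t in (0:ℝ)..1,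
    Metric.infDist ((1 - t) • u + t • v) (frontier G) ^ (α - 1) * euclidNorm (v - u)

lemma euclidNorm_le_sqrt_two_mul (v : ℝ × ℝ) : euclidNorm v ≤ Real.sqrt 2 * ‖v‖ := by
  have h1 : ‖v.1‖ ≤ ‖v‖ := norm_fst_le v
  have h2 : ‖v.2‖ ≤ ‖v‖ := norm_snd_le v
  have e1 : v.1 ^ 2 ≤ ‖v‖ ^ 2 := by
    rw [show v.1 ^ 2 = ‖v.1‖ ^ 2 by rw [Real.norm_eq_abs, sq_abs]]
    exact pow_le_pow_left₀ (norm_nonneg _) h1 2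
  have e2 : v.2 ^ 2 ≤ ‖v‖ ^ 2 := by
    rw [show v.2 ^ 2 = ‖v.2‖ ^ 2 by rw [Real.norm_eq_abs, sq_abs]]
    exact pow_le_pow_left₀ (norm_nonneg _) h2 2
  calc euclidNorm v ≤ Real.sqrt (2 * ‖v‖ ^ 2) := Real.sqrt_le_sqrt (by linarith)
    _ = Real.sqrt 2 * ‖v‖ := by
        rw [Real.sqrt_mul (by norm_num), Real.sqrt_sq (norm_nonneg _)]

lemma segLen_symm (G : Set (ℝ × ℝ)) (α : ℝ) (u v : ℝ × ℝ) :
    segLen G α u v = segLen G α v u := by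
  have hE : euclidNorm (u - v) = euclidNorm (v - u) := by
    unfold euclidNorm; congr 1
    simp only [Prod.fst_sub, Prod.snd_sub]; ring
  unfold segLen
  have := intervalIntegral.integral_comp_sub_left (a := (0:ℝ)) (b := 1)
    (fun t => Metric.infDist ((1 - t) • u + t • v) (frontier G) ^ (α - 1)
      * euclidNorm (v - u)) 1
  simp only [sub_zero, sub_self] at this
  rw [← this]
  congr 1
  ext t
  rw [hE]
  congr 3
  · module

lemma segLen_le (c : ℝ × ℝ) (r d α : ℝ) (hr : 0 < r) (hd : 0 < d)
    (hα : 0 < α) (hα1 : α ≤ 1) (u v : ℝ × ℝ)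
    (hu : ‖u - c‖ ≤ r) (hv : ‖v - c‖ ≤ r - d / 2) :
    segLen (Metric.ball c r) α u v ≤ euclidNorm (v - u) * ((d / 2) ^ (α - 1) / α) := by
  set E := euclidNorm (v - u) with hEdef
  have hE0 : (0:ℝ) ≤ E := Real.sqrt_nonneg _
  -- the distance lower bound
  have hdist : ∀ t ∈ Set.Ioc (0:ℝ) 1,
      t * (d / 2) ≤ Metric.infDist ((1 - t) • u + t • v) (frontier (Metric.ball c r)) := by
    intro t ht
    rw [frontier_ball c hr.ne']
    set z := (1 - t) • u + t • v with hz
    have hzc : ‖z - c‖ ≤ r - t * (d / 2) := by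
      have hzz : z - c = (1 - t) • (u - c) + t • (v - c) := by rw [hz]; module
      calc ‖z - c‖ ≤ ‖(1 - t) • (u - c)‖ + ‖t • (v - c)‖ := by rw [hzz]; exact norm_add_le _ _
        _ = (1 - t) * ‖u - c‖ + t * ‖v - c‖ := by
            rw [norm_smul, norm_smul, Real.norm_eq_abs, Real.norm_eq_abs,
              abs_of_nonneg (by linarith [ht.2] : (0:ℝ) ≤ 1 - t), abs_of_nonneg ht.1.le]
        _ ≤ (1 - t) * r + t * (r - d / 2) := by
            have h1 : (0:ℝ) ≤ 1 - t := by linarith [ht.2]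
            have h2 : (0:ℝ) ≤ t := ht.1.le
            gcongr
        _ = r - t * (d / 2) := by ring
    by_contra hcon
    push_neg at hcon
    have hne : (Metric.sphere c r).Nonempty := NormedSpace.sphere_nonempty.mpr hr.le
    obtain ⟨y, hy, hdy⟩ := (Metric.infDist_lt_iff hne).mp hcon
    have hyc : dist y c = r := Metric.mem_sphere.mp hy
    have : dist y c ≤ dist y z + dist z c := dist_triangle _ _ _
    rw [dist_eq_norm z c] at this
    rw [dist_comm] at hdy
    linarith
  have hfle : ∀ t ∈ Set.Ioc (0:ℝ) 1,
      Metric.infDist ((1 - t) • u + t • v) (frontier (Metric.ball c r)) ^ (α - 1) * E ≤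
        t ^ (α - 1) * ((d / 2) ^ (α - 1) * E) := by
    intro t ht
    have h1 : (0:ℝ) < t * (d / 2) := by
      have := ht.1; positivity
    have h2 := Real.rpow_le_rpow_of_nonpos h1 (hdist t ht) (by linarith : α - 1 ≤ 0)
    have h3 : (t * (d / 2)) ^ (α - 1) = t ^ (α - 1) * (d / 2) ^ (α - 1) :=
      Real.mul_rpow ht.1.le (by positivity)
    calc Metric.infDist ((1 - t) • u + t • v) (frontier (Metric.ball c r)) ^ (α - 1) * E
        ≤ (t * (d / 2)) ^ (α - 1) * E := mul_le_mul_of_nonneg_right h2 hE0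
      _ = t ^ (α - 1) * ((d / 2) ^ (α - 1) * E) := by rw [h3]; ring
  have hg_int : IntervalIntegrable (fun t : ℝ => t ^ (α - 1) * ((d / 2) ^ (α - 1) * E))
      volume 0 1 :=
    (intervalIntegral.intervalIntegrable_rpow' (by linarith)).mul_const _
  have hgval : (∫ t in (0:ℝ)..1, t ^ (α - 1) * ((d / 2) ^ (α - 1) * E)) =
      E * ((d / 2) ^ (α - 1) / α) := by
    rw [intervalIntegral.integral_mul_const, integral_rpow (Or.inl (by linarith))]
    rw [Real.one_rpow, Real.zero_rpow (by linarith : α - 1 + 1 ≠ 0)]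
    field_simp
    ring_nf; field_simp [hα.ne']
  rw [segLen]
  calc (∫ t in (0:ℝ)..1,
        Metric.infDist ((1 - t) • u + t • v) (frontier (Metric.ball c r)) ^ (α - 1) * E)
      = ∫ t in Set.Ioc (0:ℝ) 1,
        Metric.infDist ((1 - t) • u + t • v) (frontier (Metric.ball c r)) ^ (α - 1) * E :=
      intervalIntegral.integral_of_le zero_le_one
    _ ≤ ∫ t in Set.Ioc (0:ℝ) 1, t ^ (α - 1) * ((d / 2) ^ (α - 1) * E) := by
      apply integral_mono_of_nonneg
      · exact Filter.Eventually.of_forall fun t =>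
          mul_nonneg (Real.rpow_nonneg Metric.infDist_nonneg _) hE0
      · exact hg_int.1
      · filter_upwards [ae_restrict_mem measurableSet_Ioc] with t ht
        exact hfle t ht
    _ = ∫ t in (0:ℝ)..1, t ^ (α - 1) * ((d / 2) ^ (α - 1) * E) :=
      (intervalIntegral.integral_of_le zero_le_one).symm
    _ = E * ((d / 2) ^ (α - 1) / α) := hgval

lemma clamp_bounds (cen R dd x y : ℝ) (hdR : dd / 2 ≤ R)
    (hx : |x - cen| ≤ R) (hy : |y - cen| ≤ R) (hxy : |x - y| ≤ dd) :
    |max (cen - (R - dd / 2)) (min (cen + (R - dd / 2)) ((x + y) / 2)) - cen| ≤ R - dd / 2 ∧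
    |max (cen - (R - dd / 2)) (min (cen + (R - dd / 2)) ((x + y) / 2)) - x| ≤ dd / 2 ∧
    |max (cen - (R - dd / 2)) (min (cen + (R - dd / 2)) ((x + y) / 2)) - y| ≤ dd / 2 := by
  obtain ⟨hx1, hx2⟩ := abs_le.mp hx
  obtain ⟨hy1, hy2⟩ := abs_le.mp hy
  obtain ⟨hxy1, hxy2⟩ := abs_le.mp hxy
  set ρ := R - dd / 2 with hρ
  set m := (x + y) / 2 with hm
  set w := max (cen - ρ) (min (cen + ρ) m) with hw
  have hρ0 : (0:ℝ) ≤ ρ := by rw [hρ]; linarith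
  have hwlo : cen - ρ ≤ w := le_max_left _ _
  have hwhi : w ≤ cen + ρ := max_le (by linarith) (min_le_left _ _)
  have hwm : w ≤ max (cen - ρ) m := max_le_max le_rfl (min_le_right _ _)
  have hwm' : min (cen + ρ) m ≤ w := le_max_right _ _
  have hax1 : min (cen + ρ) m ≥ x - dd / 2 :=
    le_min (by rw [hρ]; linarith) (by rw [hm]; linarith)
  have hax2 : max (cen - ρ) m ≤ x + dd / 2 :=
    max_le (by rw [hρ]; linarith) (by rw [hm]; linarith)
  have hay1 : min (cen + ρ) m ≥ y - dd / 2 :=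
    le_min (by rw [hρ]; linarith) (by rw [hm]; linarith)
  have hay2 : max (cen - ρ) m ≤ y + dd / 2 :=
    max_le (by rw [hρ]; linarith) (by rw [hm]; linarith)
  exact ⟨abs_le.mpr ⟨by linarith, by linarith⟩,
    abs_le.mpr ⟨by linarith, by linarith⟩,
    abs_le.mpr ⟨by linarith, by linarith⟩⟩

/-- For a square `Q = ball c r` (uniform norm) and `a ≠ b` in `Q̄`
there is a polygonal path of at most two segments, `[a,w] ∪ [w,b]`, joining `a` to
`b`, contained in `Q` except possibly for `a, b`, with
`len_{α,Q}(γ) ≤ (3/α)‖a-b‖^α` for every `α ∈ (0,1]`. -/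
theorem two_segment_path_in_square
    (c : ℝ × ℝ) (r : ℝ) (hr : 0 < r)
    (a b : ℝ × ℝ) (ha : a ∈ closure (Metric.ball c r))
    (hb : b ∈ closure (Metric.ball c r)) (hab : a ≠ b) :
    ∃ w : ℝ × ℝ,
      (segment ℝ a w ∪ segment ℝ w b) \ {a, b} ⊆ Metric.ball c r ∧
      ∀ α ∈ Set.Ioc (0:ℝ) 1,
        segLen (Metric.ball c r) α a w + segLen (Metric.ball c r) α w b ≤
          3 / α * ‖a - b‖ ^ α := by
  have hac : ‖a - c‖ ≤ r := by
    rw [closure_ball c hr.ne'] at ha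
    rw [← dist_eq_norm]; exact mem_closedBall.mp ha
  have hbc : ‖b - c‖ ≤ r := by
    rw [closure_ball c hr.ne'] at hb
    rw [← dist_eq_norm]; exact mem_closedBall.mp hb
  set d := ‖a - b‖ with hddef
  have hd : 0 < d := norm_pos_iff.mpr (sub_ne_zero.mpr hab)
  have hd2r : d ≤ 2 * r := by
    have he : a - b = (a - c) - (b - c) := by abel
    calc d = ‖(a - c) - (b - c)‖ := by rw [hddef, ← he]
      _ ≤ ‖a - c‖ + ‖b - c‖ := norm_sub_le _ _
      _ ≤ 2 * r := by linarith
  have hdR : d / 2 ≤ r := by linarith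
  have habs1 : ∀ u : ℝ × ℝ, |u.1| ≤ ‖u‖ := fun u => by
    rw [← Real.norm_eq_abs]; exact norm_fst_le u
  have habs2 : ∀ u : ℝ × ℝ, |u.2| ≤ ‖u‖ := fun u => by
    rw [← Real.norm_eq_abs]; exact norm_snd_le u
  have ha1 : |a.1 - c.1| ≤ r := le_trans (by simpa using habs1 (a - c)) hac
  have ha2 : |a.2 - c.2| ≤ r := le_trans (by simpa using habs2 (a - c)) hac
  have hb1 : |b.1 - c.1| ≤ r := le_trans (by simpa using habs1 (b - c)) hbc
  have hb2 : |b.2 - c.2| ≤ r := le_trans (by simpa using habs2 (b - c)) hbc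
  have hab1 : |a.1 - b.1| ≤ d := by simpa using habs1 (a - b)
  have hab2 : |a.2 - b.2| ≤ d := by simpa using habs2 (a - b)
  obtain ⟨hwc1, hwa1, hwb1⟩ := clamp_bounds c.1 r d a.1 b.1 hdR ha1 hb1 hab1
  obtain ⟨hwc2, hwa2, hwb2⟩ := clamp_bounds c.2 r d a.2 b.2 hdR ha2 hb2 hab2
  set w : ℝ × ℝ :=
    (max (c.1 - (r - d / 2)) (min (c.1 + (r - d / 2)) ((a.1 + b.1) / 2)),
     max (c.2 - (r - d / 2)) (min (c.2 + (r - d / 2)) ((a.2 + b.2) / 2))) with hwdef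
  have hwc : ‖w - c‖ ≤ r - d / 2 := by
    rw [Prod.norm_def]
    simp only [Prod.fst_sub, Prod.snd_sub, Real.norm_eq_abs]
    exact max_le hwc1 hwc2
  have hwa : ‖w - a‖ ≤ d / 2 := by
    rw [Prod.norm_def]
    simp only [Prod.fst_sub, Prod.snd_sub, Real.norm_eq_abs]
    exact max_le hwa1 hwa2
  have hwb : ‖w - b‖ ≤ d / 2 := by
    rw [Prod.norm_def]
    simp only [Prod.fst_sub, Prod.snd_sub, Real.norm_eq_abs]
    exact max_le hwb1 hwb2
  refine ⟨w, ?_, ?_⟩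
  · -- containment
    rintro z ⟨hz, hznot⟩
    simp only [Set.mem_insert_iff, Set.mem_singleton_iff, not_or] at hznot
    obtain ⟨hza, hzb⟩ := hznot
    cases hz with
    | inl h =>
      rw [segment_eq_image ℝ a w] at h
      obtain ⟨t, ht, rfl⟩ := h
      rcases eq_or_lt_of_le ht.1 with h0 | h0
      · exact absurd (by rw [← h0]; simp) hza
      · rw [Metric.mem_ball, dist_eq_norm]
        have hzz : (1 - t) • a + t • w - c = (1 - t) • (a - c) + t • (w - c) := by module
        calc ‖(1 - t) • a + t • w - c‖
            ≤ ‖(1 - t) • (a - c)‖ + ‖t • (w - c)‖ := by rw [hzz]; exact norm_add_le _ _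
          _ = (1 - t) * ‖a - c‖ + t * ‖w - c‖ := by
              rw [norm_smul, norm_smul, Real.norm_eq_abs, Real.norm_eq_abs,
                abs_of_nonneg (by linarith [ht.2] : (0:ℝ) ≤ 1 - t), abs_of_nonneg h0.le]
          _ < r := by nlinarith [ht.2, hac, hwc]
    | inr h =>
      rw [segment_eq_image ℝ w b] at h
      obtain ⟨t, ht, rfl⟩ := h
      rcases eq_or_lt_of_le ht.2 with h1 | h1
      · exact absurd (by rw [h1]; simp) hzb
      · rw [Metric.mem_ball, dist_eq_norm]
        have hzz : (1 - t) • w + t • b - c = (1 - t) • (w - c) + t • (b - c) := by module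
        calc ‖(1 - t) • w + t • b - c‖
            ≤ ‖(1 - t) • (w - c)‖ + ‖t • (b - c)‖ := by rw [hzz]; exact norm_add_le _ _
          _ = (1 - t) * ‖w - c‖ + t * ‖b - c‖ := by
              rw [norm_smul, norm_smul, Real.norm_eq_abs, Real.norm_eq_abs,
                abs_of_nonneg (by linarith : (0:ℝ) ≤ 1 - t), abs_of_nonneg ht.1]
          _ < r := by nlinarith [ht.1, hbc, hwc]
  · -- the length estimate
    rintro α ⟨hα0, hα1⟩
    have X0 : (0:ℝ) ≤ (d / 2) ^ (α - 1) / α := by positivity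
    have hE1 : euclidNorm (w - a) ≤ Real.sqrt 2 * (d / 2) :=
      le_trans (euclidNorm_le_sqrt_two_mul _)
        (mul_le_mul_of_nonneg_left hwa (Real.sqrt_nonneg 2))
    have hE2 : euclidNorm (w - b) ≤ Real.sqrt 2 * (d / 2) :=
      le_trans (euclidNorm_le_sqrt_two_mul _)
        (mul_le_mul_of_nonneg_left hwb (Real.sqrt_nonneg 2))
    have h1 : segLen (Metric.ball c r) α a w ≤
        Real.sqrt 2 * (d / 2) * ((d / 2) ^ (α - 1) / α) :=
      le_trans (segLen_le c r d α hr hd hα0 hα1 a w hac hwc)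
        (mul_le_mul_of_nonneg_right hE1 X0)
    have h2 : segLen (Metric.ball c r) α w b ≤
        Real.sqrt 2 * (d / 2) * ((d / 2) ^ (α - 1) / α) := by
      rw [segLen_symm]
      exact le_trans (segLen_le c r d α hr hd hα0 hα1 b w hbc hwc)
        (mul_le_mul_of_nonneg_right hE2 X0)
    -- numeric estimate
    have hpow : (d / 2) ^ (α - 1) = d ^ (α - 1) / 2 ^ (α - 1) :=
      Real.div_rpow hd.le (show (0:ℝ) ≤ 2 by norm_num) (α - 1)
    have hda : d ^ α = d * d ^ (α - 1) := by
      rw [show α = 1 + (α - 1) by ring, Real.rpow_add hd, Real.rpow_one]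
      ring_nf
    have h2pos : (0:ℝ) < 2 ^ (α - 1) := Real.rpow_pos_of_pos two_pos _
    have h2ge : (1:ℝ) / 2 ≤ 2 ^ (α - 1) := by
      calc (1:ℝ) / 2 = 2 ^ (-1 : ℝ) := by rw [Real.rpow_neg_one]; norm_num
        _ ≤ 2 ^ (α - 1) := Real.rpow_le_rpow_of_exponent_le one_le_two (by linarith)
    have hsqrt : Real.sqrt 2 ≤ 3 / 2 := by
      rw [show (3/2:ℝ) = Real.sqrt ((3/2)^2) from (Real.sqrt_sq (by norm_num)).symm]
      exact Real.sqrt_le_sqrt (by norm_num)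
    have hdα : (0:ℝ) < d ^ α := Real.rpow_pos_of_pos hd _
    have key : Real.sqrt 2 * d * (d / 2) ^ (α - 1) ≤ 3 * d ^ α := by
      have e : Real.sqrt 2 * d * (d ^ (α - 1) / 2 ^ (α - 1)) =
          Real.sqrt 2 * d ^ α / 2 ^ (α - 1) := by rw [hda]; ring
      rw [hpow, e, div_le_iff₀ h2pos]
      linarith [mul_le_mul_of_nonneg_right h2ge hdα.le,
        mul_le_mul_of_nonneg_right hsqrt hdα.le]
    calc segLen (Metric.ball c r) α a w + segLen (Metric.ball c r) α w b
        ≤ Real.sqrt 2 * (d / 2) * ((d / 2) ^ (α - 1) / α) +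
          Real.sqrt 2 * (d / 2) * ((d / 2) ^ (α - 1) / α) := add_le_add h1 h2
      _ = (Real.sqrt 2 * d * (d / 2) ^ (α - 1)) / α := by ring
      _ ≤ (3 * d ^ α) / α := by gcongr
      _ = 3 / α * d ^ α := by ring
end

section
/- Let K, K₁, K₂ ⊂ ℝ² be pairwise disjoint squares such that K̄ ∩ K̄₁ ≠ ∅, K̄ ∩ K̄₂ ≠ ∅, and K̄₁ ∩ K̄₂ contains at most one point. Let ε be a number with 0 < ε ≤ diam K. Then there exists a square K̃ ⊂ K such that K̃̄ ∩ K̄₁ ≠ ∅ and K̃̄ ∩ K̄₂ ≠ ∅, and such that diam K̃ ≤ 2·dist(K₁, K₂) if K̄₁ ∩ K̄₂ = ∅, while diam K̃ = ε if K̄₁ ∩ K̄₂ ≠ ∅. Moreover, for each j ∈ {1,2}: if K̄ⱼ ∩ K̄ contains more than one point, then K̄ⱼ ∩ K̃̄ contains more than one point. -/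
open Set Metric

noncomputable def setDist (A B : Set (ℝ × ℝ)) : ℝ :=
  sInf ((fun q : (ℝ × ℝ) × (ℝ × ℝ) => dist q.1 q.2) '' (A ×ˢ B))


lemma mem_ball2 {c z : ℝ×ℝ} {r : ℝ} :
    z ∈ ball c r ↔ |z.1 - c.1| < r ∧ |z.2 - c.2| < r := by
  rw [mem_ball, Prod.dist_eq, max_lt_iff, Real.dist_eq, Real.dist_eq]

lemma mem_cball2 {c z : ℝ×ℝ} {r : ℝ} (hr : 0 < r) :
    z ∈ closure (ball c r) ↔ |z.1 - c.1| ≤ r ∧ |z.2 - c.2| ≤ r := by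
  rw [closure_ball c hr.ne', mem_closedBall, Prod.dist_eq, max_le_iff, Real.dist_eq, Real.dist_eq]

lemma dist2 (p q : ℝ×ℝ) : dist p q = max |p.1 - q.1| |p.2 - q.2| := by
  rw [Prod.dist_eq, Real.dist_eq, Real.dist_eq]

lemma diam_ball2 {c : ℝ×ℝ} {r : ℝ} (hr : 0 < r) : diam (ball c r) = 2 * r := by
  refine le_antisymm (diam_ball hr.le) ?_
  refine le_of_forall_pos_le_add fun δ hδ => ?_
  set m := min (δ/2) (r/2) with hm
  have hm0 : 0 < m := lt_min (by linarith) (by linarith)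
  have hmd : m ≤ δ/2 := min_le_left _ _
  have hmr : m < r := (min_le_right _ _).trans_lt (by linarith)
  have hp : (c.1 + (r - m), c.2) ∈ ball c r := by
    rw [mem_ball2]
    constructor
    · rw [show c.1 + (r - m) - c.1 = r - m by ring, abs_of_nonneg (by linarith)]; linarith
    · simpa using hr
  have hq : (c.1 - (r - m), c.2) ∈ ball c r := by
    rw [mem_ball2]
    constructor
    · rw [show c.1 - (r - m) - c.1 = -(r - m) by ring, abs_neg, abs_of_nonneg (by linarith)]
      linarith
    · simpa using hr
  have hd := dist_le_diam_of_mem isBounded_ball hp hq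
  rw [dist2] at hd
  simp only [show c.1 + (r - m) - (c.1 - (r - m)) = 2*r - 2*m by ring, sub_self, abs_zero] at hd
  rw [abs_of_nonneg (by linarith)] at hd
  simp only [max_eq_left (by linarith : (0:ℝ) ≤ 2*r - 2*m)] at hd
  linarith


lemma le_setDist {A B : Set (ℝ×ℝ)} {d : ℝ} (hA : A.Nonempty) (hB : B.Nonempty)
    (h : ∀ p ∈ A, ∀ q ∈ B, d ≤ dist p q) : d ≤ setDist A B := by
  refine le_csInf ((hA.prod hB).image _) ?_
  rintro x ⟨⟨p,q⟩, ⟨hp,hq⟩, rfl⟩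
  exact h p hp q hq

lemma setDist_comm (A B : Set (ℝ×ℝ)) : setDist A B = setDist B A := by
  unfold setDist
  congr 1
  ext d
  constructor
  · rintro ⟨⟨p,q⟩, ⟨hp,hq⟩, rfl⟩; exact ⟨⟨q,p⟩, ⟨hq,hp⟩, dist_comm q p⟩
  · rintro ⟨⟨p,q⟩, ⟨hp,hq⟩, rfl⟩; exact ⟨⟨q,p⟩, ⟨hq,hp⟩, dist_comm q p⟩

lemma setDist_image (T : (ℝ×ℝ) ≃ᵢ (ℝ×ℝ)) (A B : Set (ℝ×ℝ)) :
    setDist (T '' A) (T '' B) = setDist A B := by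
  unfold setDist
  congr 1
  ext d
  constructor
  · rintro ⟨⟨p,q⟩, ⟨⟨a,ha,rfl⟩,⟨b,hb,rfl⟩⟩, rfl⟩
    exact ⟨⟨a,b⟩, ⟨ha,hb⟩, (T.dist_eq a b).symm⟩
  · rintro ⟨⟨a,b⟩, ⟨ha,hb⟩, rfl⟩
    exact ⟨⟨T a, T b⟩, ⟨mem_image_of_mem _ ha, mem_image_of_mem _ hb⟩, T.dist_eq a b⟩

lemma dist_le_of_closure_meet {c c' : ℝ×ℝ} {r r' : ℝ}
    (h : (closure (ball c r) ∩ closure (ball c' r')).Nonempty) : dist c c' ≤ r + r' := by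
  obtain ⟨z, hz1, hz2⟩ := h
  have h1 : dist z c ≤ r := mem_closedBall.1 (closure_ball_subset_closedBall hz1)
  have h2 : dist z c' ≤ r' := mem_closedBall.1 (closure_ball_subset_closedBall hz2)
  calc dist c c' ≤ dist c z + dist z c' := dist_triangle ..
  _ ≤ r + r' := add_le_add (by rwa [dist_comm]) h2

lemma le_dist_of_disjoint {c c' : ℝ×ℝ} {r r' : ℝ} (hr : 0 < r) (hr' : 0 < r')
    (h : ball c r ∩ ball c' r' = ∅) : r + r' ≤ dist c c' := by
  by_contra hlt
  push_neg at hlt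
  have hs : (0:ℝ) < r + r' := by linarith
  set t : ℝ := r / (r + r') with ht
  have ht0 : 0 < t := div_pos hr hs
  have ht1 : t < 1 := (div_lt_one hs).2 (by linarith)
  have htr : t * (r + r') = r := by rw [ht]; field_simp
  set z : ℝ×ℝ := c + t • (c' - c) with hz
  have hzc : z - c = t • (c' - c) := by rw [hz]; abel
  have hzc' : z - c' = (t - 1) • (c' - c) := by
    rw [hz, sub_smul, one_smul]; abel
  have hd : dist c' c < r + r' := by rwa [dist_comm]
  have hmem : z ∈ ball c r ∩ ball c' r' := by
    constructor
    · rw [mem_ball, dist_eq_norm, hzc, norm_smul, Real.norm_eq_abs,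
        abs_of_pos ht0, ← dist_eq_norm]
      nlinarith [dist_nonneg (x := c') (y := c)]
    · rw [mem_ball, dist_eq_norm, hzc', norm_smul, Real.norm_eq_abs,
        abs_of_neg (by linarith : t - 1 < 0), ← dist_eq_norm]
      nlinarith [dist_nonneg (x := c') (y := c)]
  rw [h] at hmem
  exact hmem

lemma closure_meet_of_dist_le {c c' : ℝ×ℝ} {r r' : ℝ} (hr : 0 < r) (hr' : 0 < r')
    (h : dist c c' ≤ r + r') : (closure (ball c r) ∩ closure (ball c' r')).Nonempty := by
  have hs : (0:ℝ) < r + r' := by linarith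
  set t : ℝ := r / (r + r') with ht
  have ht0 : 0 < t := div_pos hr hs
  have ht1 : t < 1 := (div_lt_one hs).2 (by linarith)
  set z : ℝ×ℝ := c + t • (c' - c) with hz
  have hzc : z - c = t • (c' - c) := by rw [hz]; abel
  have hzc' : z - c' = (t - 1) • (c' - c) := by rw [hz, sub_smul, one_smul]; abel
  have hd : dist c' c ≤ r + r' := by rwa [dist_comm]
  refine ⟨z, ?_, ?_⟩
  · rw [closure_ball c hr.ne', mem_closedBall, dist_eq_norm, hzc, norm_smul,
      Real.norm_eq_abs, abs_of_pos ht0, ← dist_eq_norm]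
    have : t * dist c' c ≤ t * (r + r') := by nlinarith [dist_nonneg (x := c') (y := c)]
    have htr : t * (r + r') = r := by rw [ht]; field_simp
    linarith
  · rw [closure_ball c' hr'.ne', mem_closedBall, dist_eq_norm, hzc', norm_smul,
      Real.norm_eq_abs, abs_of_neg (by linarith : t - 1 < 0), ← dist_eq_norm]
    have : (1 - t) * dist c' c ≤ (1 - t) * (r + r') := by
      nlinarith [dist_nonneg (x := c') (y := c)]
    have htr : (1 - t) * (r + r') = r' := by rw [ht]; field_simp; ring
    linarith

def negX : (ℝ×ℝ) ≃ᵢ (ℝ×ℝ) where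
  toEquiv := ⟨fun p => (-p.1, p.2), fun p => (-p.1, p.2), fun p => by simp, fun p => by simp⟩
  isometry_toFun := Isometry.of_dist_eq fun p q => by
    simp only [dist2, Equiv.coe_fn_mk]
    rw [show -p.1 - -q.1 = -(p.1 - q.1) by ring, abs_neg]

def negY : (ℝ×ℝ) ≃ᵢ (ℝ×ℝ) where
  toEquiv := ⟨fun p => (p.1, -p.2), fun p => (p.1, -p.2), fun p => by simp, fun p => by simp⟩
  isometry_toFun := Isometry.of_dist_eq fun p q => by
    simp only [dist2, Equiv.coe_fn_mk]
    rw [show -p.2 - -q.2 = -(p.2 - q.2) by ring, abs_neg]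

def swapXY : (ℝ×ℝ) ≃ᵢ (ℝ×ℝ) where
  toEquiv := Equiv.prodComm ℝ ℝ
  isometry_toFun := Isometry.of_dist_eq fun p q => by
    simp only [dist2, Equiv.prodComm_apply, Prod.fst_swap, Prod.snd_swap]
    exact max_comm _ _

@[simp] lemma negX_apply (p : ℝ×ℝ) : negX p = (-p.1, p.2) := rfl
@[simp] lemma negY_apply (p : ℝ×ℝ) : negY p = (p.1, -p.2) := rfl
@[simp] lemma swapXY_apply (p : ℝ×ℝ) : swapXY p = (p.2, p.1) := rfl

lemma image_closure_ball (T : (ℝ×ℝ) ≃ᵢ (ℝ×ℝ)) (c : ℝ×ℝ) (r : ℝ) :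
    T '' closure (ball c r) = closure (ball (T c) r) := by
  rw [← T.image_ball]
  exact T.toHomeomorph.image_closure _

lemma mem_closure_ball_T (T : (ℝ×ℝ) ≃ᵢ (ℝ×ℝ)) {z c : ℝ×ℝ} {r : ℝ} :
    z ∈ closure (ball (T c) r) ↔ T.symm z ∈ closure (ball c r) := by
  rw [← image_closure_ball]
  constructor
  · rintro ⟨w, hw, rfl⟩; simpa using hw
  · intro h; exact ⟨T.symm z, h, by simp⟩

lemma inter_closure_ball_T (T : (ℝ×ℝ) ≃ᵢ (ℝ×ℝ)) (c c' : ℝ×ℝ) (r r' : ℝ) :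
    closure (ball (T c) r) ∩ closure (ball (T c') r')
      = T '' (closure (ball c r) ∩ closure (ball c' r')) := by
  rw [Set.image_inter T.injective, image_closure_ball, image_closure_ball]

def Goal (cK c₁ c₂ : ℝ × ℝ) (rK r₁ r₂ ε : ℝ) : Prop :=
  ∃ (c' : ℝ × ℝ) (r' : ℝ), 0 < r' ∧
    Metric.ball c' r' ⊆ Metric.ball cK rK ∧
    (closure (Metric.ball c' r') ∩ closure (Metric.ball c₁ r₁)).Nonempty ∧
    (closure (Metric.ball c' r') ∩ closure (Metric.ball c₂ r₂)).Nonempty ∧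
    (closure (Metric.ball c₁ r₁) ∩ closure (Metric.ball c₂ r₂) = ∅ →
      Metric.diam (Metric.ball c' r') ≤
        2 * setDist (Metric.ball c₁ r₁) (Metric.ball c₂ r₂)) ∧
    ((closure (Metric.ball c₁ r₁) ∩ closure (Metric.ball c₂ r₂)).Nonempty →
      Metric.diam (Metric.ball c' r') = ε) ∧
    (¬ (closure (Metric.ball c₁ r₁) ∩ closure (Metric.ball cK rK)).Subsingleton →
      ¬ (closure (Metric.ball c₁ r₁) ∩ closure (Metric.ball c' r')).Subsingleton) ∧
    (¬ (closure (Metric.ball c₂ r₂) ∩ closure (Metric.ball cK rK)).Subsingleton →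
      ¬ (closure (Metric.ball c₂ r₂) ∩ closure (Metric.ball c' r')).Subsingleton)


lemma subsingleton_image_iff (T : (ℝ×ℝ) ≃ᵢ (ℝ×ℝ)) {s : Set (ℝ×ℝ)} :
    (T '' s).Subsingleton ↔ s.Subsingleton := by
  constructor
  · intro h x hx y hy
    exact T.injective (h (mem_image_of_mem _ hx) (mem_image_of_mem _ hy))
  · exact fun h => h.image _

lemma goal_transport (T : (ℝ×ℝ) ≃ᵢ (ℝ×ℝ)) {cK c₁ c₂ : ℝ×ℝ} {rK r₁ r₂ ε : ℝ}
    (h : Goal (T cK) (T c₁) (T c₂) rK r₁ r₂ ε) : Goal cK c₁ c₂ rK r₁ r₂ ε := by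
  obtain ⟨c', r', h0, hsub, hn1, hn2, hdE, hdN, hs1, hs2⟩ := h
  have hball : ∀ (c : ℝ×ℝ) (r : ℝ), ball (T.symm c) r = T ⁻¹' ball c r := by
    intro c r
    exact (T.preimage_ball c r).symm
  have hTc' : T (T.symm c') = c' := T.apply_symm_apply c'
  have hIc : ∀ (c : ℝ×ℝ) (r : ℝ),
      closure (ball c r) ∩ closure (ball (T.symm c') r')
        = T.symm '' (closure (ball (T c) r) ∩ closure (ball c' r')) := by
    intro c r
    have := inter_closure_ball_T T.symm (T c) c' r r'
    simpa [T.symm_apply_apply] using this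
  refine ⟨T.symm c', r', h0, ?_, ?_, ?_, ?_, ?_, ?_, ?_⟩
  · rw [hball c' r']
    intro x hx
    have : T x ∈ ball (T cK) rK := hsub hx
    rwa [mem_ball, T.dist_eq, ← mem_ball] at this
  · have := hn1
    rw [Set.inter_comm, hIc c₁ r₁, Set.image_nonempty, Set.inter_comm] at *
    exact this
  · have := hn2
    rw [Set.inter_comm, hIc c₂ r₂, Set.image_nonempty, Set.inter_comm] at *
    exact this
  · intro hE
    have hE' : closure (ball (T c₁) r₁) ∩ closure (ball (T c₂) r₂) = ∅ := by
      rw [inter_closure_ball_T T c₁ c₂ r₁ r₂, hE, Set.image_empty]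
    have := hdE hE'
    have hd1 : diam (ball (T.symm c') r') = diam (ball c' r') := by
      conv_rhs => rw [← hTc']
      rw [← T.image_ball, T.isometry.diam_image]
    have hd2 : setDist (ball (T c₁) r₁) (ball (T c₂) r₂) = setDist (ball c₁ r₁) (ball c₂ r₂) := by
      rw [← T.image_ball, ← T.image_ball, setDist_image]
    rw [hd1]
    rw [hd2] at this
    exact this
  · intro hN
    have hN' : (closure (ball (T c₁) r₁) ∩ closure (ball (T c₂) r₂)).Nonempty := by
      rw [inter_closure_ball_T T c₁ c₂ r₁ r₂, Set.image_nonempty]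
      exact hN
    have := hdN hN'
    have hd1 : diam (ball (T.symm c') r') = diam (ball c' r') := by
      conv_rhs => rw [← hTc']
      rw [← T.image_ball, T.isometry.diam_image]
    rw [hd1]
    exact this
  · intro hns
    have hns' : ¬ (closure (ball (T c₁) r₁) ∩ closure (ball (T cK) rK)).Subsingleton := by
      rw [inter_closure_ball_T T c₁ cK r₁ rK, subsingleton_image_iff]
      exact hns
    intro hcon
    apply hs1 hns'
    rw [← hTc', inter_closure_ball_T T c₁ (T.symm c') r₁ r', subsingleton_image_iff]
    exact hcon
  · intro hns
    have hns' : ¬ (closure (ball (T c₂) r₂) ∩ closure (ball (T cK) rK)).Subsingleton := by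
      rw [inter_closure_ball_T T c₂ cK r₂ rK, subsingleton_image_iff]
      exact hns
    intro hcon
    apply hs2 hns'
    rw [← hTc', inter_closure_ball_T T c₂ (T.symm c') r₂ r', subsingleton_image_iff]
    exact hcon

lemma goal_swap12 {cK c₁ c₂ : ℝ×ℝ} {rK r₁ r₂ ε : ℝ}
    (h : Goal cK c₂ c₁ rK r₂ r₁ ε) : Goal cK c₁ c₂ rK r₁ r₂ ε := by
  obtain ⟨c', r', h0, hsub, hn1, hn2, hdE, hdN, hs1, hs2⟩ := h
  refine ⟨c', r', h0, hsub, hn2, hn1, ?_, ?_, hs2, hs1⟩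
  · intro hE
    rw [Set.inter_comm] at hE
    have := hdE hE
    rwa [setDist_comm] at this
  · intro hN
    rw [Set.inter_comm] at hN
    exact hdN hN

@[simp] lemma pfst (a b : ℝ) : ((a,b) : ℝ×ℝ).1 = a := rfl
@[simp] lemma psnd (a b : ℝ) : ((a,b) : ℝ×ℝ).2 = b := rfl

lemma mem_ball2R {c : ℝ×ℝ} {zx zy r : ℝ} :
    ((zx, zy) : ℝ×ℝ) ∈ ball c r ↔ (c.1 - r < zx ∧ zx < c.1 + r) ∧ (c.2 - r < zy ∧ zy < c.2 + r) := by
  rw [mem_ball2]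
  simp only [pfst, psnd, abs_lt]
  constructor <;> rintro ⟨⟨h1,h2⟩,h3,h4⟩ <;> exact ⟨⟨by linarith, by linarith⟩, by linarith, by linarith⟩

lemma mem_cball2R {c : ℝ×ℝ} {zx zy r : ℝ} (hr : 0 < r) :
    ((zx, zy) : ℝ×ℝ) ∈ closure (ball c r) ↔
      (c.1 - r ≤ zx ∧ zx ≤ c.1 + r) ∧ (c.2 - r ≤ zy ∧ zy ≤ c.2 + r) := by
  rw [mem_cball2 hr]
  simp only [pfst, psnd, abs_le]
  constructor <;> rintro ⟨⟨h1,h2⟩,h3,h4⟩ <;> exact ⟨⟨by linarith, by linarith⟩, by linarith, by linarith⟩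

lemma dist_cases {p q : ℝ×ℝ} {s : ℝ} (h : dist p q = s) :
    |p.1 - q.1| ≤ s ∧ |p.2 - q.2| ≤ s ∧ (|p.1 - q.1| = s ∨ |p.2 - q.2| = s) := by
  rw [Prod.dist_eq, Real.dist_eq, Real.dist_eq] at h
  refine ⟨h ▸ le_max_left _ _, h ▸ le_max_right _ _, ?_⟩
  rcases max_choice |p.1 - q.1| |p.2 - q.2| with hc | hc <;> rw [hc] at h
  exacts [Or.inl h, Or.inr h]


lemma not_subsingleton_of_two {S : Set (ℝ×ℝ)} {p q : ℝ×ℝ} (hp : p ∈ S) (hq : q ∈ S)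
    (hne : p ≠ q) : ¬ S.Subsingleton := fun h => hne (h hp hq)

lemma nondeg_left {cq cs : ℝ×ℝ} {rq rs : ℝ} (hrq : 0 < rq) (hrs : 0 < rs)
    (hx : cq.1 + rq = cs.1 - rs)
    (hns : ¬ (closure (ball cq rq) ∩ closure (ball cs rs)).Subsingleton) :
    max (cs.2 - rs) (cq.2 - rq) < min (cs.2 + rs) (cq.2 + rq) := by
  by_contra hle
  push_neg at hle
  rw [min_le_iff] at hle
  have hle' : cs.2 + rs ≤ cs.2 - rs ∨ cs.2 + rs ≤ cq.2 - rq ∨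
      cq.2 + rq ≤ cs.2 - rs ∨ cq.2 + rq ≤ cq.2 - rq := by
    rcases hle with h | h <;> rcases le_max_iff.1 h with h' | h'
    exacts [Or.inl h', Or.inr (Or.inl h'), Or.inr (Or.inr (Or.inl h')),
      Or.inr (Or.inr (Or.inr h'))]
  clear hle
  apply hns
  intro p hp q hq
  obtain ⟨hpq, hps⟩ := hp
  obtain ⟨hqq, hqs⟩ := hq
  rw [mem_cball2 hrq] at hpq hqq
  rw [mem_cball2 hrs] at hps hqs
  simp only [abs_le] at hpq hqq hps hqs
  obtain ⟨⟨a1,a2⟩,⟨a3,a4⟩⟩ := hpq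
  obtain ⟨⟨b1,b2⟩,⟨b3,b4⟩⟩ := hps
  obtain ⟨⟨e1,e2⟩,⟨e3,e4⟩⟩ := hqq
  obtain ⟨⟨f1,f2⟩,⟨f3,f4⟩⟩ := hqs
  have hp1 : p.1 = cq.1 + rq := by linarith
  have hq1 : q.1 = cq.1 + rq := by linarith
  have hp2 : p.2 = q.2 := by
    rcases hle' with h | h | h | h <;> linarith
  exact Prod.ext (hp1.trans hq1.symm) hp2

lemma nondeg_below {cq cs : ℝ×ℝ} {rq rs : ℝ} (hrq : 0 < rq) (hrs : 0 < rs)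
    (hy : cq.2 + rq = cs.2 - rs)
    (hns : ¬ (closure (ball cq rq) ∩ closure (ball cs rs)).Subsingleton) :
    max (cs.1 - rs) (cq.1 - rq) < min (cs.1 + rs) (cq.1 + rq) := by
  by_contra hle
  push_neg at hle
  rw [min_le_iff] at hle
  have hle' : cs.1 + rs ≤ cs.1 - rs ∨ cs.1 + rs ≤ cq.1 - rq ∨
      cq.1 + rq ≤ cs.1 - rs ∨ cq.1 + rq ≤ cq.1 - rq := by
    rcases hle with h | h <;> rcases le_max_iff.1 h with h' | h'
    exacts [Or.inl h', Or.inr (Or.inl h'), Or.inr (Or.inr (Or.inl h')),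
      Or.inr (Or.inr (Or.inr h'))]
  clear hle
  apply hns
  intro p hp q hq
  obtain ⟨hpq, hps⟩ := hp
  obtain ⟨hqq, hqs⟩ := hq
  rw [mem_cball2 hrq] at hpq hqq
  rw [mem_cball2 hrs] at hps hqs
  simp only [abs_le] at hpq hqq hps hqs
  obtain ⟨⟨a1,a2⟩,⟨a3,a4⟩⟩ := hpq
  obtain ⟨⟨b1,b2⟩,⟨b3,b4⟩⟩ := hps
  obtain ⟨⟨e1,e2⟩,⟨e3,e4⟩⟩ := hqq
  obtain ⟨⟨f1,f2⟩,⟨f3,f4⟩⟩ := hqs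
  have hp2 : p.2 = cq.2 + rq := by linarith
  have hq2 : q.2 = cq.2 + rq := by linarith
  have hp1 : p.1 = q.1 := by
    rcases hle' with h | h | h | h <;> linarith
  exact Prod.ext hp1 (hp2.trans hq2.symm)

lemma masterLR (cK c₁ c₂ : ℝ×ℝ) (rK r₁ r₂ ε : ℝ) (hrK : 0<rK) (hr₁ : 0<r₁) (hr₂ : 0<r₂)
    (hd1 : dist cK c₁ = rK + r₁) (hd2 : dist cK c₂ = rK + r₂)
    (hx1 : c₁.1 + r₁ = cK.1 - rK) (hx2 : c₂.1 - r₂ = cK.1 + rK) :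
    Goal cK c₁ c₂ rK r₁ r₂ ε := by
  refine ⟨cK, rK, hrK, subset_rfl, ?_, ?_, ?_, ?_, fun h => h, fun h => h⟩
  · exact closure_meet_of_dist_le hrK hr₁ hd1.le
  · exact closure_meet_of_dist_le hrK hr₂ hd2.le
  · intro _
    rw [diam_ball2 hrK]
    have hsd : 2*rK ≤ setDist (ball c₁ r₁) (ball c₂ r₂) := by
      refine le_setDist (nonempty_ball.2 hr₁) (nonempty_ball.2 hr₂) ?_
      intro p hp q hq
      rw [mem_ball2] at hp hq
      obtain ⟨hp1, _⟩ := hp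
      obtain ⟨hq1, _⟩ := hq
      rw [abs_lt] at hp1 hq1
      rw [dist2]
      have : 2*rK ≤ |p.1 - q.1| := le_trans (by linarith [neg_le_abs (p.1 - q.1)]) le_rfl
      exact le_trans this (le_max_left _ _)
    linarith
  · intro hN
    exfalso
    have hle := dist_le_of_closure_meet hN
    rw [dist2] at hle
    have h1 := le_max_left |c₁.1 - c₂.1| |c₁.2 - c₂.2|
    have h2 := neg_le_abs (c₁.1 - c₂.1)
    linarith

lemma masterLL (cK c₁ c₂ : ℝ×ℝ) (rK r₁ r₂ ε : ℝ) (hrK : 0<rK) (hr₁ : 0<r₁) (hr₂ : 0<r₂)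
    (hd1 : dist cK c₁ = rK + r₁) (hd2 : dist cK c₂ = rK + r₂)
    (hx1 : c₁.1 + r₁ = cK.1 - rK) (hx2 : c₂.1 + r₂ = cK.1 - rK)
    (hy12 : c₁.2 + r₁ < c₂.2 - r₂) : Goal cK c₁ c₂ rK r₁ r₂ ε := by
  obtain ⟨_, hdy1, _⟩ := dist_cases hd1
  obtain ⟨_, hdy2, _⟩ := dist_cases hd2
  rw [abs_le] at hdy1 hdy2
  set d₁ := c₁.2 + r₁ with hd₁
  set e₂ := c₂.2 - r₂ with he₂
  set g := e₂ - d₁ with hg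
  have hg0 : 0 < g := by simp only [hg]; linarith
  set u := max (cK.2 - rK) (d₁ - g/2) with hu
  set v := min (cK.2 + rK) (e₂ + g/2) with hv
  set s := v - u with hs
  have hub : cK.2 - rK ≤ u := le_max_left _ _
  have hud : u ≤ d₁ := max_le (by linarith [hdy1.2]) (by linarith)
  have hve : e₂ ≤ v := le_min (by linarith [hdy2.1]) (by linarith)
  have hvb : v ≤ cK.2 + rK := min_le_left _ _
  have hs0 : 0 < s := by simp only [hs]; linarith
  have hs2g : s ≤ 2*g := by
    have h1 := min_le_right (cK.2 + rK) (e₂ + g/2)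
    have h2 := le_max_right (cK.2 - rK) (d₁ - g/2)
    simp only [hs]; linarith
  have hs2R : s ≤ 2*rK := by simp only [hs]; linarith
  have hr' : (0:ℝ) < s/2 := by linarith
  refine ⟨(cK.1 - rK + s/2, (u+v)/2), s/2, hr', ?_, ?_, ?_, ?_, ?_, ?_, ?_⟩
  · intro z hz
    rw [mem_ball2] at hz ⊢
    obtain ⟨hz1, hz2⟩ := hz
    simp only [pfst, psnd] at hz1 hz2
    rw [abs_lt] at hz1 hz2 ⊢
    rw [abs_lt]
    constructor
    · constructor <;> linarith
    · constructor <;> linarith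
  · refine ⟨(cK.1 - rK, d₁), ?_, ?_⟩
    · rw [mem_cball2R hr']
      simp only [pfst, psnd]
      exact ⟨⟨by linarith, by linarith⟩, by linarith, by linarith⟩
    · rw [mem_cball2R hr₁]
      exact ⟨⟨by linarith, by linarith⟩, by simp only [hd₁]; constructor <;> linarith⟩
  · refine ⟨(cK.1 - rK, e₂), ?_, ?_⟩
    · rw [mem_cball2R hr']
      simp only [pfst, psnd]
      exact ⟨⟨by linarith, by linarith⟩, by linarith, by linarith⟩
    · rw [mem_cball2R hr₂]
      exact ⟨⟨by linarith, by linarith⟩, by simp only [he₂]; constructor <;> linarith⟩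
  · intro _
    rw [diam_ball2 hr']
    have hsd : g ≤ setDist (ball c₁ r₁) (ball c₂ r₂) := by
      refine le_setDist (nonempty_ball.2 hr₁) (nonempty_ball.2 hr₂) ?_
      intro p hp q hq
      rw [mem_ball2] at hp hq
      obtain ⟨_, hp2⟩ := hp
      obtain ⟨_, hq2⟩ := hq
      rw [abs_lt] at hp2 hq2
      rw [dist2]
      refine le_trans (le_trans ?_ (neg_le_abs (p.2 - q.2))) (le_max_right _ _)
      simp only [hg, he₂, hd₁]; linarith
    linarith
  · intro hN
    exfalso
    have hle := dist_le_of_closure_meet hN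
    rw [dist2] at hle
    have h1 := le_max_right |c₁.1 - c₂.1| |c₁.2 - c₂.2|
    have h2 := neg_le_abs (c₁.2 - c₂.2)
    linarith
  · intro hns
    have hnd := nondeg_left hr₁ hrK hx1 hns
    have hmin := min_le_right (cK.2 + rK) (c₁.2 + r₁)
    have hmax := le_max_left (cK.2 - rK) (c₁.2 - r₁)
    have hbd : cK.2 - rK < d₁ := by simp only [hd₁]; linarith
    have hud' : u < d₁ := max_lt hbd (by linarith)
    set lo := max u (c₁.2 - r₁) with hlo
    have hlod : lo < d₁ := max_lt hud' (by simp only [hd₁]; linarith)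
    have hlou : u ≤ lo := le_max_left _ _
    have hloc : c₁.2 - r₁ ≤ lo := le_max_right _ _
    refine not_subsingleton_of_two (p := (cK.1 - rK, lo)) (q := (cK.1 - rK, d₁)) ⟨?_, ?_⟩ ⟨?_, ?_⟩ ?_
    · rw [mem_cball2R hr₁]
      exact ⟨⟨by linarith, by linarith⟩, by linarith, by simp only [hd₁] at hlod ⊢; linarith⟩
    · rw [mem_cball2R hr']
      simp only [pfst, psnd]
      exact ⟨⟨by linarith, by linarith⟩, by linarith, by linarith⟩
    · rw [mem_cball2R hr₁]
      exact ⟨⟨by linarith, by linarith⟩, by simp only [hd₁]; constructor <;> linarith⟩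
    · rw [mem_cball2R hr']
      simp only [pfst, psnd]
      exact ⟨⟨by linarith, by linarith⟩, by linarith, by linarith⟩
    · intro h
      rw [Prod.mk.injEq] at h
      have := h.2
      linarith
  · intro hns
    have hnd := nondeg_left hr₂ hrK hx2 hns
    have hmin := min_le_left (cK.2 + rK) (c₂.2 + r₂)
    have hmax := le_max_right (cK.2 - rK) (c₂.2 - r₂)
    have hbd : e₂ < cK.2 + rK := by simp only [he₂]; linarith
    have hev : e₂ < v := lt_min hbd (by linarith)
    set hi := min v (c₂.2 + r₂) with hhi
    have hehi : e₂ < hi := lt_min hev (by simp only [he₂]; linarith)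
    have hhiv : hi ≤ v := min_le_left _ _
    have hhic : hi ≤ c₂.2 + r₂ := min_le_right _ _
    refine not_subsingleton_of_two (p := (cK.1 - rK, e₂)) (q := (cK.1 - rK, hi)) ⟨?_, ?_⟩ ⟨?_, ?_⟩ ?_
    · rw [mem_cball2R hr₂]
      exact ⟨⟨by linarith, by linarith⟩, by simp only [he₂]; constructor <;> linarith⟩
    · rw [mem_cball2R hr']
      simp only [pfst, psnd]
      exact ⟨⟨by linarith, by linarith⟩, by linarith, by linarith⟩
    · rw [mem_cball2R hr₂]
      exact ⟨⟨by linarith, by linarith⟩, by simp only [he₂] at hehi ⊢; constructor <;> linarith⟩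
    · rw [mem_cball2R hr']
      simp only [pfst, psnd]
      exact ⟨⟨by linarith, by linarith⟩, by linarith, by linarith⟩
    · intro h
      rw [Prod.mk.injEq] at h
      have := h.2
      linarith

lemma masterLB (cK c₁ c₂ : ℝ×ℝ) (rK r₁ r₂ ε : ℝ) (hrK : 0<rK) (hr₁ : 0<r₁) (hr₂ : 0<r₂)
    (hd1 : dist cK c₁ = rK + r₁) (hd2 : dist cK c₂ = rK + r₂)
    (h12 : r₁ + r₂ < dist c₁ c₂)
    (hx1 : c₁.1 + r₁ = cK.1 - rK) (hy2 : c₂.2 + r₂ = cK.2 - rK) :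
    Goal cK c₁ c₂ rK r₁ r₂ ε := by
  obtain ⟨_, hdy1, _⟩ := dist_cases hd1
  obtain ⟨hdx2, _, _⟩ := dist_cases hd2
  rw [abs_le] at hdy1 hdx2
  -- gaps
  set gx := (c₂.1 - r₂) - (cK.1 - rK) with hgx
  set gy := (c₁.2 - r₁) - (cK.2 - rK) with hgy
  have hgor : 0 < gx ∨ 0 < gy := by
    rw [dist2] at h12
    rcases lt_max_iff.1 h12 with h | h
    · rcases abs_cases (c₁.1 - c₂.1) with ⟨he, _⟩ | ⟨he, _⟩ <;> rw [he] at h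
      · exfalso; linarith [hdx2.1]
      · left; simp only [hgx]; linarith
    · rcases abs_cases (c₁.2 - c₂.2) with ⟨he, _⟩ | ⟨he, _⟩ <;> rw [he] at h
      · right; simp only [hgy]; linarith
      · exfalso; linarith [hdy1.2]
  set g := max gx gy with hgdef
  have hg0 : 0 < g := by rcases hgor with h | h
    <;> [exact lt_of_lt_of_le h (le_max_left _ _); exact lt_of_lt_of_le h (le_max_right _ _)]
  have hgx2R : gx ≤ 2*rK := by simp only [hgx]; linarith [hdx2.2]
  have hgy2R : gy ≤ 2*rK := by simp only [hgy]; linarith [hdy1.1]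
  have hg2R : g ≤ 2*rK := max_le hgx2R hgy2R
  set s := min (2*rK) (2*g) with hs
  have hs0 : 0 < s := lt_min (by linarith) (by linarith)
  have hs2R : s ≤ 2*rK := min_le_left _ _
  have hs2g : s ≤ 2*g := min_le_right _ _
  have hgxs : gx ≤ s := le_min (hgx2R) (by linarith [le_max_left gx gy])
  have hgys : gy ≤ s := le_min (hgy2R) (by linarith [le_max_right gx gy])
  have hr' : (0:ℝ) < s/2 := by linarith
  refine ⟨(cK.1 - rK + s/2, cK.2 - rK + s/2), s/2, hr', ?_, ?_, ?_, ?_, ?_, ?_, ?_⟩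
  · intro z hz
    rw [mem_ball2] at hz ⊢
    obtain ⟨hz1, hz2⟩ := hz
    simp only [pfst, psnd] at hz1 hz2
    rw [abs_lt] at hz1 hz2 ⊢
    rw [abs_lt]
    constructor
    · constructor <;> linarith
    · constructor <;> linarith
  · refine ⟨(cK.1 - rK, max (cK.2 - rK) (c₁.2 - r₁)), ?_, ?_⟩
    · rw [mem_cball2R hr']
      simp only [pfst, psnd]
      refine ⟨⟨by linarith, by linarith⟩, by linarith [le_max_left (cK.2 - rK) (c₁.2 - r₁)], ?_⟩
      refine max_le (by linarith) (by simp only [hgy] at hgys; linarith)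
    · rw [mem_cball2R hr₁]
      refine ⟨⟨by linarith, by linarith⟩, le_max_right _ _, ?_⟩
      refine max_le (by linarith [hdy1.2]) (by linarith)
  · refine ⟨(max (cK.1 - rK) (c₂.1 - r₂), cK.2 - rK), ?_, ?_⟩
    · rw [mem_cball2R hr']
      simp only [pfst, psnd]
      refine ⟨⟨by linarith [le_max_left (cK.1 - rK) (c₂.1 - r₂)], ?_⟩, by linarith, by linarith⟩
      refine max_le (by linarith) (by simp only [hgx] at hgxs; linarith)
    · rw [mem_cball2R hr₂]
      refine ⟨⟨le_max_right _ _, ?_⟩, by linarith, by linarith⟩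
      refine max_le (by linarith [hdx2.1]) (by linarith)
  · intro _
    rw [diam_ball2 hr']
    have hsd : g ≤ setDist (ball c₁ r₁) (ball c₂ r₂) := by
      refine le_setDist (nonempty_ball.2 hr₁) (nonempty_ball.2 hr₂) ?_
      intro p hp q hq
      rw [mem_ball2] at hp hq
      obtain ⟨hp1, hp2⟩ := hp
      obtain ⟨hq1, hq2⟩ := hq
      rw [abs_lt] at hp1 hp2 hq1 hq2
      rw [dist2]
      rcases max_choice gx gy with hc | hc <;> rw [hgdef, hc]
      · refine le_trans (le_trans ?_ (neg_le_abs (p.1 - q.1))) (le_max_left _ _)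
        simp only [hgx]; linarith
      · refine le_trans (le_trans ?_ (le_abs_self (p.2 - q.2))) (le_max_right _ _)
        simp only [hgy]; linarith
    linarith
  · intro hN
    exfalso
    have hle := dist_le_of_closure_meet hN
    linarith
  · intro hns
    have hnd := nondeg_left hr₁ hrK hx1 hns
    have hmin := min_le_left (cK.2 + rK) (c₁.2 + r₁)
    have hmin2 := min_le_right (cK.2 + rK) (c₁.2 + r₁)
    have hmax := le_max_left (cK.2 - rK) (c₁.2 - r₁)
    have hmax2 := le_max_right (cK.2 - rK) (c₁.2 - r₁)
    -- strictness: gy < s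
    have hgys' : gy < s := by
      have h1 : gy < 2*rK := by simp only [hgy]; linarith
      have h2 : gy < 2*g := by
        rcases le_or_gt gy gx with h | h
        · linarith [le_max_left gx gy]
        · linarith [le_max_right gx gy]
      exact lt_min h1 h2
    set lo := max (cK.2 - rK) (c₁.2 - r₁) with hlo
    set hi := min (cK.2 - rK + s) (c₁.2 + r₁) with hhi
    have hlohi : lo < hi := by
      refine max_lt (lt_min (by linarith) (by linarith)) (lt_min ?_ ?_)
      · simp only [hgy] at hgys'; linarith
      · linarith
    refine not_subsingleton_of_two (p := (cK.1 - rK, lo)) (q := (cK.1 - rK, hi)) ⟨?_, ?_⟩ ⟨?_, ?_⟩ ?_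
    · rw [mem_cball2R hr₁]
      refine ⟨⟨by linarith, by linarith⟩, le_max_right _ _, by linarith [min_le_right (cK.2 - rK + s) (c₁.2 + r₁)]⟩
    · rw [mem_cball2R hr']
      simp only [pfst, psnd]
      refine ⟨⟨by linarith, by linarith⟩, by linarith [hlo, le_max_left (cK.2 - rK) (c₁.2 - r₁)], by linarith [min_le_left (cK.2 - rK + s) (c₁.2 + r₁)]⟩
    · rw [mem_cball2R hr₁]
      refine ⟨⟨by linarith, by linarith⟩, by linarith, min_le_right _ _⟩
    · rw [mem_cball2R hr']
      simp only [pfst, psnd]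
      refine ⟨⟨by linarith, by linarith⟩, by linarith, by linarith [hhi, min_le_left (cK.2 - rK + s) (c₁.2 + r₁)]⟩
    · intro h
      rw [Prod.mk.injEq] at h
      have := h.2
      linarith
  · intro hns
    have hnd := nondeg_below hr₂ hrK hy2 hns
    have hmin := min_le_left (cK.1 + rK) (c₂.1 + r₂)
    have hmin2 := min_le_right (cK.1 + rK) (c₂.1 + r₂)
    have hmax := le_max_left (cK.1 - rK) (c₂.1 - r₂)
    have hmax2 := le_max_right (cK.1 - rK) (c₂.1 - r₂)
    have hgxs' : gx < s := by
      have h1 : gx < 2*rK := by simp only [hgx]; linarith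
      have h2 : gx < 2*g := by
        rcases le_or_gt gx gy with h | h
        · linarith [le_max_right gx gy]
        · linarith [le_max_left gx gy]
      exact lt_min h1 h2
    set lo := max (cK.1 - rK) (c₂.1 - r₂) with hlo
    set hi := min (cK.1 - rK + s) (c₂.1 + r₂) with hhi
    have hlohi : lo < hi := by
      refine max_lt (lt_min (by linarith) (by linarith)) (lt_min ?_ ?_)
      · simp only [hgx] at hgxs'; linarith
      · linarith
    refine not_subsingleton_of_two (p := (lo, cK.2 - rK)) (q := (hi, cK.2 - rK)) ⟨?_, ?_⟩ ⟨?_, ?_⟩ ?_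
    · rw [mem_cball2R hr₂]
      refine ⟨⟨le_max_right _ _, by linarith [min_le_right (cK.1 - rK + s) (c₂.1 + r₂)]⟩, by linarith, by linarith⟩
    · rw [mem_cball2R hr']
      simp only [pfst, psnd]
      refine ⟨⟨by linarith [hlo, le_max_left (cK.1 - rK) (c₂.1 - r₂)], by linarith [min_le_left (cK.1 - rK + s) (c₂.1 + r₂)]⟩, by linarith, by linarith⟩
    · rw [mem_cball2R hr₂]
      refine ⟨⟨by linarith, min_le_right _ _⟩, by linarith, by linarith⟩
    · rw [mem_cball2R hr']
      simp only [pfst, psnd]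
      refine ⟨⟨by linarith, by linarith [hhi, min_le_left (cK.1 - rK + s) (c₂.1 + r₂)]⟩, by linarith, by linarith⟩
    · intro h
      rw [Prod.mk.injEq] at h
      have := h.1
      linarith

lemma masterA (cK c₁ c₂ : ℝ×ℝ) (rK r₁ r₂ ε : ℝ) (hrK : 0<rK) (hr₁ : 0<r₁) (hr₂ : 0<r₂)
    (h21 : c₂.1 = c₁.1 + (r₁ + r₂)) (h22 : c₂.2 = c₁.2 + (r₁ + r₂))
    (hKx : cK.1 = c₁.1 + r₁ + rK) (hKy : cK.2 = c₁.2 + r₁ - rK)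
    (hε : 0 < ε) (hεK : ε ≤ 2*rK) : Goal cK c₁ c₂ rK r₁ r₂ ε := by
  have hε2 : (0:ℝ) < ε/2 := by linarith
  refine ⟨(c₁.1 + r₁ + ε/2, c₁.2 + r₁ - ε/2), ε/2, hε2, ?_, ?_, ?_, ?_, ?_, ?_, ?_⟩
  · intro z hz
    rw [mem_ball2] at hz ⊢
    obtain ⟨hz1, hz2⟩ := hz
    simp only [pfst, psnd] at hz1 hz2
    rw [abs_lt] at hz1 hz2 ⊢
    rw [abs_lt]
    constructor
    · constructor <;> linarith
    · constructor <;> linarith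
  · refine ⟨(c₁.1 + r₁, c₁.2 + r₁), ?_, ?_⟩
    · rw [mem_cball2R hε2]
      simp only [pfst, psnd]
      exact ⟨⟨by linarith, by linarith⟩, by linarith, by linarith⟩
    · rw [mem_cball2R hr₁]
      exact ⟨⟨by linarith, by linarith⟩, by linarith, by linarith⟩
  · refine ⟨(c₁.1 + r₁, c₁.2 + r₁), ?_, ?_⟩
    · rw [mem_cball2R hε2]
      simp only [pfst, psnd]
      exact ⟨⟨by linarith, by linarith⟩, by linarith, by linarith⟩
    · rw [mem_cball2R hr₂]
      exact ⟨⟨by linarith, by linarith⟩, by linarith, by linarith⟩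
  · intro hE
    exfalso
    have hm : ((c₁.1 + r₁, c₁.2 + r₁) : ℝ×ℝ) ∈
        closure (ball c₁ r₁) ∩ closure (ball c₂ r₂) := by
      constructor
      · rw [mem_cball2R hr₁]
        exact ⟨⟨by linarith, by linarith⟩, by linarith, by linarith⟩
      · rw [mem_cball2R hr₂]
        exact ⟨⟨by linarith, by linarith⟩, by linarith, by linarith⟩
    rw [hE] at hm
    exact Set.notMem_empty _ hm
  · intro _
    rw [diam_ball2 hε2]
    ring
  · intro _
    set m := min ε (2*r₁) with hm
    have hm0 : 0 < m := lt_min hε (by linarith)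
    have hm1 : m ≤ ε := min_le_left _ _
    have hm2 : m ≤ 2*r₁ := min_le_right _ _
    refine not_subsingleton_of_two (p := (c₁.1 + r₁, c₁.2 + r₁))
      (q := (c₁.1 + r₁, c₁.2 + r₁ - m)) ⟨?_, ?_⟩ ⟨?_, ?_⟩ ?_
    · rw [mem_cball2R hr₁]
      exact ⟨⟨by linarith, by linarith⟩, by linarith, by linarith⟩
    · rw [mem_cball2R hε2]
      simp only [pfst, psnd]
      exact ⟨⟨by linarith, by linarith⟩, by linarith, by linarith⟩
    · rw [mem_cball2R hr₁]
      exact ⟨⟨by linarith, by linarith⟩, by linarith, by linarith⟩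
    · rw [mem_cball2R hε2]
      simp only [pfst, psnd]
      exact ⟨⟨by linarith, by linarith⟩, by linarith, by linarith⟩
    · intro h
      rw [Prod.mk.injEq] at h
      have := h.2
      linarith
  · intro _
    set m := min ε (2*r₂) with hm
    have hm0 : 0 < m := lt_min hε (by linarith)
    have hm1 : m ≤ ε := min_le_left _ _
    have hm2 : m ≤ 2*r₂ := min_le_right _ _
    refine not_subsingleton_of_two (p := (c₁.1 + r₁, c₁.2 + r₁))
      (q := (c₁.1 + r₁ + m, c₁.2 + r₁)) ⟨?_, ?_⟩ ⟨?_, ?_⟩ ?_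
    · rw [mem_cball2R hr₂]
      exact ⟨⟨by linarith, by linarith⟩, by linarith, by linarith⟩
    · rw [mem_cball2R hε2]
      simp only [pfst, psnd]
      exact ⟨⟨by linarith, by linarith⟩, by linarith, by linarith⟩
    · rw [mem_cball2R hr₂]
      exact ⟨⟨by linarith, by linarith⟩, by linarith, by linarith⟩
    · rw [mem_cball2R hε2]
      simp only [pfst, psnd]
      exact ⟨⟨by linarith, by linarith⟩, by linarith, by linarith⟩
    · intro h
      rw [Prod.mk.injEq] at h
      have := h.1
      linarith

lemma caseA_pp (cK c₁ c₂ : ℝ×ℝ) (rK r₁ r₂ ε : ℝ) (hrK : 0<rK) (hr₁ : 0<r₁) (hr₂ : 0<r₂)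
    (hd1 : dist cK c₁ = rK + r₁) (hd2 : dist cK c₂ = rK + r₂)
    (h21 : c₂.1 = c₁.1 + (r₁ + r₂)) (h22 : c₂.2 = c₁.2 + (r₁ + r₂))
    (hε : 0 < ε) (hεK : ε ≤ 2*rK) : Goal cK c₁ c₂ rK r₁ r₂ ε := by
  obtain ⟨hb1x, hb1y, ho1⟩ := dist_cases hd1
  obtain ⟨hb2x, hb2y, ho2⟩ := dist_cases hd2
  rw [abs_le] at hb1x hb1y hb2x hb2y
  have h01 : (0:ℝ) ≤ rK + r₁ := by linarith
  have h02 : (0:ℝ) ≤ rK + r₂ := by linarith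
  have h1 : cK.1 - rK = c₁.1 + r₁ ∨ cK.2 - rK = c₁.2 + r₁ := by
    rcases ho1 with h | h <;> rcases (abs_eq h01).1 h with hp | hm
    · left; linarith
    · exfalso; linarith [hb2x.1]
    · right; linarith
    · exfalso; linarith [hb2y.1]
  have h2 : cK.1 + rK = c₁.1 + r₁ ∨ cK.2 + rK = c₁.2 + r₁ := by
    rcases ho2 with h | h <;> rcases (abs_eq h02).1 h with hp | hm
    · exfalso; linarith [hb1x.2]
    · left; linarith
    · exfalso; linarith [hb1y.2]
    · right; linarith
  rcases h1 with hL | hB <;> rcases h2 with hR | hT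
  · exfalso; linarith
  · exact masterA cK c₁ c₂ rK r₁ r₂ ε hrK hr₁ hr₂ h21 h22 (by linarith) (by linarith) hε hεK
  · apply goal_transport swapXY
    refine masterA _ _ _ rK r₁ r₂ ε hrK hr₁ hr₂ ?_ ?_ ?_ ?_ hε hεK <;>
      simp only [swapXY_apply, pfst, psnd] <;> linarith
  · exfalso; linarith

lemma caseA (cK c₁ c₂ : ℝ×ℝ) (rK r₁ r₂ ε : ℝ) (hrK : 0<rK) (hr₁ : 0<r₁) (hr₂ : 0<r₂)
    (hd1 : dist cK c₁ = rK + r₁) (hd2 : dist cK c₂ = rK + r₂)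
    (hcx : |c₁.1 - c₂.1| = r₁ + r₂) (hcy : |c₁.2 - c₂.2| = r₁ + r₂)
    (hε : 0 < ε) (hεK : ε ≤ 2*rK) : Goal cK c₁ c₂ rK r₁ r₂ ε := by
  have hs0 : (0:ℝ) ≤ r₁ + r₂ := by linarith
  rcases (abs_eq hs0).1 hcx with hx | hx <;> rcases (abs_eq hs0).1 hcy with hy | hy
  · apply goal_transport negX
    apply goal_transport negY
    refine caseA_pp _ _ _ rK r₁ r₂ ε hrK hr₁ hr₂ ?_ ?_ ?_ ?_ hε hεK
    · rw [negY.dist_eq, negX.dist_eq]; exact hd1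
    · rw [negY.dist_eq, negX.dist_eq]; exact hd2
    · simp only [negX_apply, negY_apply, pfst, psnd]; linarith
    · simp only [negX_apply, negY_apply, pfst, psnd]; linarith
  · apply goal_transport negX
    refine caseA_pp _ _ _ rK r₁ r₂ ε hrK hr₁ hr₂ ?_ ?_ ?_ ?_ hε hεK
    · rw [negX.dist_eq]; exact hd1
    · rw [negX.dist_eq]; exact hd2
    · simp only [negX_apply, pfst, psnd]; linarith
    · simp only [negX_apply, pfst, psnd]; linarith
  · apply goal_transport negY
    refine caseA_pp _ _ _ rK r₁ r₂ ε hrK hr₁ hr₂ ?_ ?_ ?_ ?_ hε hεK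
    · rw [negY.dist_eq]; exact hd1
    · rw [negY.dist_eq]; exact hd2
    · simp only [negY_apply, pfst, psnd]; linarith
    · simp only [negY_apply, pfst, psnd]; linarith
  · exact caseA_pp _ _ _ rK r₁ r₂ ε hrK hr₁ hr₂ hd1 hd2 (by linarith) (by linarith) hε hεK

lemma caseB_left (cK c₁ c₂ : ℝ×ℝ) (rK r₁ r₂ ε : ℝ) (hrK : 0<rK) (hr₁ : 0<r₁) (hr₂ : 0<r₂)
    (hd1 : dist cK c₁ = rK + r₁) (hd2 : dist cK c₂ = rK + r₂)
    (h12 : r₁ + r₂ < dist c₁ c₂) (hx1 : c₁.1 + r₁ = cK.1 - rK) :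
    Goal cK c₁ c₂ rK r₁ r₂ ε := by
  obtain ⟨hb2x, hb2y, ho2⟩ := dist_cases hd2
  rw [abs_le] at hb2x hb2y
  have h02 : (0:ℝ) ≤ rK + r₂ := by linarith
  rcases ho2 with h | h <;> rcases (abs_eq h02).1 h with hp | hm
  · -- K₂ left as well
    have hx2 : c₂.1 + r₂ = cK.1 - rK := by linarith
    have hy : r₁ + r₂ < |c₁.2 - c₂.2| := by
      rw [dist2] at h12
      rcases lt_max_iff.1 h12 with h' | h'
      · exfalso
        rcases abs_cases (c₁.1 - c₂.1) with ⟨he, _⟩ | ⟨he, _⟩ <;> rw [he] at h' <;> linarith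
      · exact h'
    rcases abs_cases (c₁.2 - c₂.2) with ⟨he, _⟩ | ⟨he, _⟩ <;> rw [he] at hy
    · apply goal_swap12
      exact masterLL cK c₂ c₁ rK r₂ r₁ ε hrK hr₂ hr₁ hd2 hd1 hx2 hx1 (by linarith)
    · exact masterLL cK c₁ c₂ rK r₁ r₂ ε hrK hr₁ hr₂ hd1 hd2 hx1 hx2 (by linarith)
  · exact masterLR cK c₁ c₂ rK r₁ r₂ ε hrK hr₁ hr₂ hd1 hd2 hx1 (by linarith)
  · exact masterLB cK c₁ c₂ rK r₁ r₂ ε hrK hr₁ hr₂ hd1 hd2 h12 hx1 (by linarith)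
  · apply goal_transport negY
    refine masterLB _ _ _ rK r₁ r₂ ε hrK hr₁ hr₂ ?_ ?_ ?_ ?_ ?_
    · rw [negY.dist_eq]; exact hd1
    · rw [negY.dist_eq]; exact hd2
    · rw [negY.dist_eq]; exact h12
    · simp only [negY_apply, pfst, psnd]; linarith
    · simp only [negY_apply, pfst, psnd]; linarith

lemma caseB (cK c₁ c₂ : ℝ×ℝ) (rK r₁ r₂ ε : ℝ) (hrK : 0<rK) (hr₁ : 0<r₁) (hr₂ : 0<r₂)
    (hd1 : dist cK c₁ = rK + r₁) (hd2 : dist cK c₂ = rK + r₂)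
    (h12 : r₁ + r₂ < dist c₁ c₂) : Goal cK c₁ c₂ rK r₁ r₂ ε := by
  obtain ⟨_, _, ho1⟩ := dist_cases hd1
  have h01 : (0:ℝ) ≤ rK + r₁ := by linarith
  rcases ho1 with h | h <;> rcases (abs_eq h01).1 h with hp | hm
  · exact caseB_left cK c₁ c₂ rK r₁ r₂ ε hrK hr₁ hr₂ hd1 hd2 h12 (by linarith)
  · apply goal_transport negX
    refine caseB_left _ _ _ rK r₁ r₂ ε hrK hr₁ hr₂ ?_ ?_ ?_ ?_
    · rw [negX.dist_eq]; exact hd1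
    · rw [negX.dist_eq]; exact hd2
    · rw [negX.dist_eq]; exact h12
    · simp only [negX_apply, pfst, psnd]; linarith
  · apply goal_transport swapXY
    refine caseB_left _ _ _ rK r₁ r₂ ε hrK hr₁ hr₂ ?_ ?_ ?_ ?_
    · rw [swapXY.dist_eq]; exact hd1
    · rw [swapXY.dist_eq]; exact hd2
    · rw [swapXY.dist_eq]; exact h12
    · simp only [swapXY_apply, pfst, psnd]; linarith
  · apply goal_transport swapXY
    apply goal_transport negX
    refine caseB_left _ _ _ rK r₁ r₂ ε hrK hr₁ hr₂ ?_ ?_ ?_ ?_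
    · rw [negX.dist_eq, swapXY.dist_eq]; exact hd1
    · rw [negX.dist_eq, swapXY.dist_eq]; exact hd2
    · rw [negX.dist_eq, swapXY.dist_eq]; exact h12
    · simp only [negX_apply, swapXY_apply, pfst, psnd]; linarith

lemma corner_x (c₁ c₂ : ℝ×ℝ) (r₁ r₂ : ℝ) (hr₁ : 0<r₁) (hr₂ : 0<r₂)
    (hdeq : dist c₁ c₂ = r₁ + r₂)
    (h12 : (closure (ball c₁ r₁) ∩ closure (ball c₂ r₂)).Subsingleton) :
    |c₁.1 - c₂.1| = r₁ + r₂ := by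
  obtain ⟨hbx, hby, _⟩ := dist_cases hdeq
  by_contra h'
  have hlt : |c₁.1 - c₂.1| < r₁ + r₂ := lt_of_le_of_ne hbx h'
  rw [abs_lt] at hlt
  rw [abs_le] at hby
  set xlo := max (c₁.1 - r₁) (c₂.1 - r₂) with hxlo
  set xhi := min (c₁.1 + r₁) (c₂.1 + r₂) with hxhi
  set ylo := max (c₁.2 - r₁) (c₂.2 - r₂) with hylo
  have hxx : xlo < xhi :=
    max_lt (lt_min (by linarith) (by linarith)) (lt_min (by linarith) (by linarith))
  have hx1 := le_max_left (c₁.1 - r₁) (c₂.1 - r₂)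
  have hx2 := le_max_right (c₁.1 - r₁) (c₂.1 - r₂)
  have hx3 := min_le_left (c₁.1 + r₁) (c₂.1 + r₂)
  have hx4 := min_le_right (c₁.1 + r₁) (c₂.1 + r₂)
  have hy1 := le_max_left (c₁.2 - r₁) (c₂.2 - r₂)
  have hy2 := le_max_right (c₁.2 - r₁) (c₂.2 - r₂)
  have hyb1 : ylo ≤ c₁.2 + r₁ := max_le (by linarith) (by linarith)
  have hyb2 : ylo ≤ c₂.2 + r₂ := max_le (by linarith) (by linarith)
  have hm1 : ((xlo, ylo) : ℝ×ℝ) ∈ closure (ball c₁ r₁) ∩ closure (ball c₂ r₂) := by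
    constructor
    · rw [mem_cball2R hr₁]
      exact ⟨⟨by linarith, by linarith⟩, by linarith, by linarith⟩
    · rw [mem_cball2R hr₂]
      exact ⟨⟨by linarith, by linarith⟩, by linarith, by linarith⟩
  have hm2 : ((xhi, ylo) : ℝ×ℝ) ∈ closure (ball c₁ r₁) ∩ closure (ball c₂ r₂) := by
    constructor
    · rw [mem_cball2R hr₁]
      exact ⟨⟨by linarith, by linarith⟩, by linarith, by linarith⟩
    · rw [mem_cball2R hr₂]
      exact ⟨⟨by linarith, by linarith⟩, by linarith, by linarith⟩
  have := h12 hm1 hm2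
  rw [Prod.mk.injEq] at this
  have := this.1
  linarith

lemma corner_y (c₁ c₂ : ℝ×ℝ) (r₁ r₂ : ℝ) (hr₁ : 0<r₁) (hr₂ : 0<r₂)
    (hdeq : dist c₁ c₂ = r₁ + r₂)
    (h12 : (closure (ball c₁ r₁) ∩ closure (ball c₂ r₂)).Subsingleton) :
    |c₁.2 - c₂.2| = r₁ + r₂ := by
  obtain ⟨hbx, hby, _⟩ := dist_cases hdeq
  by_contra h'
  have hlt : |c₁.2 - c₂.2| < r₁ + r₂ := lt_of_le_of_ne hby h'
  rw [abs_lt] at hlt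
  rw [abs_le] at hbx
  set ylo := max (c₁.2 - r₁) (c₂.2 - r₂) with hylo
  set yhi := min (c₁.2 + r₁) (c₂.2 + r₂) with hyhi
  set xlo := max (c₁.1 - r₁) (c₂.1 - r₂) with hxlo
  have hyy : ylo < yhi :=
    max_lt (lt_min (by linarith) (by linarith)) (lt_min (by linarith) (by linarith))
  have hy1 := le_max_left (c₁.2 - r₁) (c₂.2 - r₂)
  have hy2 := le_max_right (c₁.2 - r₁) (c₂.2 - r₂)
  have hy3 := min_le_left (c₁.2 + r₁) (c₂.2 + r₂)
  have hy4 := min_le_right (c₁.2 + r₁) (c₂.2 + r₂)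
  have hx1 := le_max_left (c₁.1 - r₁) (c₂.1 - r₂)
  have hx2 := le_max_right (c₁.1 - r₁) (c₂.1 - r₂)
  have hxb1 : xlo ≤ c₁.1 + r₁ := max_le (by linarith) (by linarith)
  have hxb2 : xlo ≤ c₂.1 + r₂ := max_le (by linarith) (by linarith)
  have hm1 : ((xlo, ylo) : ℝ×ℝ) ∈ closure (ball c₁ r₁) ∩ closure (ball c₂ r₂) := by
    constructor
    · rw [mem_cball2R hr₁]
      exact ⟨⟨by linarith, by linarith⟩, by linarith, by linarith⟩
    · rw [mem_cball2R hr₂]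
      exact ⟨⟨by linarith, by linarith⟩, by linarith, by linarith⟩
  have hm2 : ((xlo, yhi) : ℝ×ℝ) ∈ closure (ball c₁ r₁) ∩ closure (ball c₂ r₂) := by
    constructor
    · rw [mem_cball2R hr₁]
      exact ⟨⟨by linarith, by linarith⟩, by linarith, by linarith⟩
    · rw [mem_cball2R hr₂]
      exact ⟨⟨by linarith, by linarith⟩, by linarith, by linarith⟩
  have := h12 hm1 hm2
  rw [Prod.mk.injEq] at this
  have := this.2
  linarith

/-- Let `K, K₁, K₂` be pairwise disjoint squares (uniform norm)
with `K̄ ∩ K̄₁ ≠ ∅`, `K̄ ∩ K̄₂ ≠ ∅` and `K̄₁ ∩ K̄₂` at most a point, and let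
`0 < ε ≤ diam K`.  Then there is a square `K̃ ⊆ K` whose closure meets both `K̄₁`
and `K̄₂`, with `diam K̃ ≤ 2 dist(K₁,K₂)` if `K̄₁ ∩ K̄₂ = ∅` and `diam K̃ = ε` if
`K̄₁ ∩ K̄₂ ≠ ∅`; moreover for `j = 1,2`, if `K̄ⱼ ∩ K̄` has more than one point then
so does `K̄ⱼ ∩ K̃̄`. -/
theorem intermediate_square
    (cK c₁ c₂ : ℝ × ℝ) (rK r₁ r₂ : ℝ) (hrK : 0 < rK) (hr₁ : 0 < r₁) (hr₂ : 0 < r₂)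
    (hd01 : Metric.ball cK rK ∩ Metric.ball c₁ r₁ = ∅)
    (hd02 : Metric.ball cK rK ∩ Metric.ball c₂ r₂ = ∅)
    (hd12 : Metric.ball c₁ r₁ ∩ Metric.ball c₂ r₂ = ∅)
    (hm1 : (closure (Metric.ball cK rK) ∩ closure (Metric.ball c₁ r₁)).Nonempty)
    (hm2 : (closure (Metric.ball cK rK) ∩ closure (Metric.ball c₂ r₂)).Nonempty)
    (h12 : (closure (Metric.ball c₁ r₁) ∩ closure (Metric.ball c₂ r₂)).Subsingleton)
    (ε : ℝ) (hε : 0 < ε) (hεK : ε ≤ Metric.diam (Metric.ball cK rK)) :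
    ∃ (c' : ℝ × ℝ) (r' : ℝ), 0 < r' ∧
      Metric.ball c' r' ⊆ Metric.ball cK rK ∧
      (closure (Metric.ball c' r') ∩ closure (Metric.ball c₁ r₁)).Nonempty ∧
      (closure (Metric.ball c' r') ∩ closure (Metric.ball c₂ r₂)).Nonempty ∧
      (closure (Metric.ball c₁ r₁) ∩ closure (Metric.ball c₂ r₂) = ∅ →
        Metric.diam (Metric.ball c' r') ≤
          2 * setDist (Metric.ball c₁ r₁) (Metric.ball c₂ r₂)) ∧
      ((closure (Metric.ball c₁ r₁) ∩ closure (Metric.ball c₂ r₂)).Nonempty →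
        Metric.diam (Metric.ball c' r') = ε) ∧
      (¬ (closure (Metric.ball c₁ r₁) ∩ closure (Metric.ball cK rK)).Subsingleton →
        ¬ (closure (Metric.ball c₁ r₁) ∩ closure (Metric.ball c' r')).Subsingleton) ∧
      (¬ (closure (Metric.ball c₂ r₂) ∩ closure (Metric.ball cK rK)).Subsingleton →
        ¬ (closure (Metric.ball c₂ r₂) ∩ closure (Metric.ball c' r')).Subsingleton) := by
  have hεK' : ε ≤ 2 * rK := by rwa [diam_ball2 hrK] at hεK
  have hd1 : dist cK c₁ = rK + r₁ :=
    le_antisymm (dist_le_of_closure_meet hm1) (le_dist_of_disjoint hrK hr₁ hd01)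
  have hd2 : dist cK c₂ = rK + r₂ :=
    le_antisymm (dist_le_of_closure_meet hm2) (le_dist_of_disjoint hrK hr₂ hd02)
  have hd12ge : r₁ + r₂ ≤ dist c₁ c₂ := le_dist_of_disjoint hr₁ hr₂ hd12
  have key : Goal cK c₁ c₂ rK r₁ r₂ ε := by
    rcases eq_empty_or_nonempty
      (closure (Metric.ball c₁ r₁) ∩ closure (Metric.ball c₂ r₂)) with hE | hN
    · have hstrict : r₁ + r₂ < dist c₁ c₂ := by
        rcases lt_or_eq_of_le hd12ge with h | h
        · exact h
        · exfalso
          have := closure_meet_of_dist_le hr₁ hr₂ h.ge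
          rw [hE] at this
          exact Set.not_nonempty_empty this
      exact caseB cK c₁ c₂ rK r₁ r₂ ε hrK hr₁ hr₂ hd1 hd2 hstrict
    · have hdeq : dist c₁ c₂ = r₁ + r₂ := le_antisymm (dist_le_of_closure_meet hN) hd12ge
      exact caseA cK c₁ c₂ rK r₁ r₂ ε hrK hr₁ hr₂ hd1 hd2
        (corner_x c₁ c₂ r₁ r₂ hr₁ hr₂ hdeq h12) (corner_y c₁ c₂ r₁ r₂ hr₁ hr₂ hdeq h12)
        hε hεK'
  exact key
end
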